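/- arXiv:2603.23166 — 7 statements merged into one kernel-verified Lean document; each statement's English description precedes it below -/
import Mathlib

section
/- Let p > 2 be a prime with binary expansion p = ∑_{n=0}^{t-1} s_n 2^n where s_0 = s_{t-1} = 1, and let q = ∑_{n=0}^{t-1} s_{t-1-n} 2^n be its binary reverse. Let T be a positive integer with ord_q(2) ∣ T and ord_p(2) ∤ T. Then gcd(2^T - 1, p) = 1 and gcd(2^T - 1, 2^(T-t) q) = q; consequently, for the T-periodic sequence S with one period (s_0,…,s_{t-1},0,…,0), the 2-adic complexity λ(S) = log₂(2^T - 1) equals the symmetric 2-adic complexity plus log₂(q). -/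
/-- Theorem 1 of the paper: sequences derived from non-palindromic primes. -/
theorem stmt1 (t T : ℕ) (s : ℕ → ℕ)
    (hbits : ∀ n < t, s n ≤ 1) (hs0 : s 0 = 1) (hst : s (t - 1) = 1)
    (p q : ℕ)
    (hp_def : p = ∑ n ∈ Finset.range t, s n * 2 ^ n)
    (hq_def : q = ∑ n ∈ Finset.range t, s (t - 1 - n) * 2 ^ n)
    (hp_prime : Nat.Prime p) (hp2 : 2 < p) (hnonpal : p ≠ q)
    (hT : 0 < T) (htT : t ≤ T)
    (hordq : orderOf (2 : ZMod q) ∣ T)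
    (hordp : ¬ orderOf (2 : ZMod p) ∣ T) :
    Nat.gcd (2 ^ T - 1) p = 1 ∧
    Nat.gcd (2 ^ T - 1) (2 ^ (T - t) * q) = q ∧
    Real.logb 2 (((2 ^ T - 1 : ℕ) : ℝ) / (Nat.gcd (2 ^ T - 1) p : ℝ))
      = Real.logb 2 ((2 ^ T - 1 : ℕ) : ℝ) ∧
    Real.logb 2 (((2 ^ T - 1 : ℕ) : ℝ) / (Nat.gcd (2 ^ T - 1) p : ℝ))
      = min (Real.logb 2 (((2 ^ T - 1 : ℕ) : ℝ) / (Nat.gcd (2 ^ T - 1) p : ℝ)))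
            (Real.logb 2 (((2 ^ T - 1 : ℕ) : ℝ) / (Nat.gcd (2 ^ T - 1) (2 ^ (T - t) * q) : ℝ)))
        + Real.logb 2 (q : ℝ) := by
  -- t ≥ 2
  have ht2 : 2 ≤ t := by
    by_contra h
    push_neg at h
    interval_cases t <;> simp_all [hp_def]
  have h2T : (1:ℕ) ≤ 2 ^ T := Nat.one_le_two_pow
  -- q is odd and ≥ 2
  have ht' : t = (t - 1) + 1 := by omega
  have hqodd : q % 2 = 1 := by
    have hsum : q = (∑ n ∈ Finset.range (t-1), s (t - 1 - (n+1)) * 2 ^ (n+1)) + s (t-1-0) * 2^0 := by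
      rw [hq_def]; conv_lhs => rw [ht']
      exact Finset.sum_range_succ' _ _
    have hdvd : 2 ∣ ∑ n ∈ Finset.range (t-1), s (t - 1 - (n+1)) * 2 ^ (n+1) :=
      Finset.dvd_sum fun i _ => Dvd.dvd.mul_left (dvd_pow_self 2 (Nat.succ_ne_zero i)) _
    obtain ⟨k, hk⟩ := hdvd
    simp only [Nat.sub_zero, pow_zero, mul_one, hst] at hsum
    omega
  have hq2 : 2 ≤ q := by
    have hmem : t - 1 ∈ Finset.range t := Finset.mem_range.mpr (by omega)
    have h1 : s (t - 1 - (t-1)) * 2 ^ (t-1) ≤ q := by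
      rw [hq_def]
      exact Finset.single_le_sum (f := fun n => s (t - 1 - n) * 2 ^ n)
        (fun i _ => Nat.zero_le _) hmem
    have h2 : (2:ℕ) ≤ 2 ^ (t-1) := by
      calc (2:ℕ) = 2^1 := rfl
      _ ≤ 2 ^ (t-1) := Nat.pow_le_pow_right (by norm_num) (by omega)
    simp only [Nat.sub_self, hs0, one_mul] at h1
    omega
  have hq0 : q ≠ 0 := by omega
  haveI : NeZero q := ⟨hq0⟩
  -- q ∣ 2^T - 1
  have hqdvd : q ∣ 2 ^ T - 1 := by
    have hpow : (2 : ZMod q) ^ T = 1 := orderOf_dvd_iff_pow_eq_one.mp hordq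
    have : ((2 ^ T - 1 : ℕ) : ZMod q) = 0 := by
      push_cast [Nat.cast_sub h2T]
      rw [hpow]; ring
    exact (ZMod.natCast_eq_zero_iff _ _).mp this
  -- p does not divide 2^T - 1
  have hpndvd : ¬ p ∣ 2 ^ T - 1 := by
    intro hdvd
    apply hordp
    apply orderOf_dvd_iff_pow_eq_one.mpr
    haveI : NeZero p := ⟨hp_prime.ne_zero⟩
    have : ((2 ^ T - 1 : ℕ) : ZMod p) = 0 := (ZMod.natCast_eq_zero_iff _ _).mpr hdvd
    push_cast [Nat.cast_sub h2T] at this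
    linear_combination this
  have hgcd1 : Nat.gcd (2 ^ T - 1) p = 1 :=
    Nat.Coprime.gcd_eq_one (((hp_prime.coprime_iff_not_dvd).mpr hpndvd).symm)
  -- second gcd
  have hTodd : (2 ^ T - 1) % 2 = 1 := by
    obtain ⟨k, hk⟩ := dvd_pow_self 2 hT.ne'
    omega
  have hcop2 : Nat.Coprime (2 ^ T - 1) (2 ^ (T - t)) := by
    apply Nat.Coprime.pow_right
    exact Nat.coprime_comm.mp ((Nat.prime_two.coprime_iff_not_dvd).mpr (by omega))
  have hgcd2 : Nat.gcd (2 ^ T - 1) (2 ^ (T - t) * q) = q := by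
    rw [Nat.Coprime.gcd_mul_left_cancel_right _ hcop2.symm]
    exact Nat.gcd_eq_right hqdvd
  refine ⟨hgcd1, hgcd2, ?_, ?_⟩
  · rw [hgcd1]; norm_num
  · rw [hgcd1, hgcd2]
    have hN1 : (1:ℝ) ≤ ((2 ^ T - 1 : ℕ) : ℝ) := by
      have : 1 ≤ 2 ^ T - 1 := by
        have : 2 ≤ 2 ^ T := by calc (2:ℕ) = 2^1 := rfl
                                   _ ≤ 2 ^ T := Nat.pow_le_pow_right (by norm_num) hT
        omega
      exact_mod_cast this
    have hq1 : (1:ℝ) ≤ (q:ℝ) := by exact_mod_cast (by omega : 1 ≤ q)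
    have hlogq : 0 ≤ Real.logb 2 (q:ℝ) := Real.logb_nonneg (by norm_num) hq1
    simp only [Nat.cast_one, div_one]
    rw [Real.logb_div (by linarith) (by linarith)]
    rw [min_eq_right (by linarith)]
    ring
end

section
/- Let k ≥ (N+1)/2 and consider S_N = (s_0,…,s_{N-1}) with s_n = 1 for n < k, s_k = 0, and arbitrary remaining bits. Then Λ(S_N) ≥ 2^{k-1} + 1. -/
/-- The `N`th rational complexity of a finite binary sequence `(s 0, …, s (N-1))`:
`min { max(q,|f|) : q·∑ sₙ2ⁿ ≡ f (mod 2^N), q > 0 odd }`. -/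
noncomputable def ratComplexity (N : ℕ) (s : ℕ → ℕ) : ℕ :=
  sInf {m : ℕ | ∃ q f : ℤ, 0 < q ∧ Odd q ∧
    (2 ^ N : ℤ) ∣ q * (∑ n ∈ Finset.range N, (s n : ℤ) * 2 ^ n) - f ∧
    (m : ℤ) = max q |f|}

theorem stmt6 (N k : ℕ) (hk : N + 1 ≤ 2 * k) (hkN : k ≤ N - 1) (hN : 2 ≤ N)
    (s : ℕ → ℕ) (hbits : ∀ n < N, s n ≤ 1)
    (h1 : ∀ n < k, s n = 1) (hk0 : s k = 0) :
    2 ^ (k - 1) + 1 ≤ ratComplexity N s := by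
  have hk2 : 2 ≤ k := by omega
  have hkN' : k + 1 ≤ N := by omega
  set T : ℤ := ∑ n ∈ Finset.range N, (s n : ℤ) * 2 ^ n with hT
  -- geometric sum
  have hgeo' : ∀ j : ℕ, ∑ n ∈ Finset.range j, (2:ℤ) ^ n = 2 ^ j - 1 := by
    intro j
    induction j with
    | zero => simp
    | succ n ih => rw [Finset.sum_range_succ, ih]; ring
  have hgeo := hgeo' k
  have hsum1 : ∑ n ∈ Finset.range (k+1), (s n : ℤ) * 2 ^ n = 2 ^ k - 1 := by
    rw [Finset.sum_range_succ, hk0]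
    have : ∑ n ∈ Finset.range k, (s n : ℤ) * 2 ^ n = ∑ n ∈ Finset.range k, (2:ℤ) ^ n := by
      apply Finset.sum_congr rfl
      intro n hn
      rw [h1 n (Finset.mem_range.mp hn)]
      simp
    rw [this, hgeo]
    simp
  have hdvdT : (2:ℤ) ^ (k+1) ∣ T - (2 ^ k - 1) := by
    have hsplit : T = (∑ n ∈ Finset.range (k+1), (s n : ℤ) * 2 ^ n)
        + ∑ n ∈ Finset.Ico (k+1) N, (s n : ℤ) * 2 ^ n := by
      rw [hT, Finset.range_eq_Ico, ← Finset.sum_Ico_consecutive _ (Nat.zero_le _) hkN', ← Finset.range_eq_Ico]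
    rw [hsplit, hsum1]
    have : 2 ^ k - 1 + (∑ n ∈ Finset.Ico (k+1) N, (s n : ℤ) * 2 ^ n) - (2 ^ k - 1)
        = ∑ n ∈ Finset.Ico (k+1) N, (s n : ℤ) * 2 ^ n := by ring
    rw [this]
    apply Finset.dvd_sum
    intro n hn
    have hkn : k + 1 ≤ n := (Finset.mem_Ico.mp hn).1
    exact Dvd.dvd.mul_left (pow_dvd_pow 2 hkn) _
  -- nonemptiness of the set
  have hTnn : 0 ≤ max (1:ℤ) |T| := le_trans zero_le_one (le_max_left _ _)
  have hne : {m : ℕ | ∃ q f : ℤ, 0 < q ∧ Odd q ∧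
      (2 ^ N : ℤ) ∣ q * T - f ∧ (m : ℤ) = max q |f|}.Nonempty := by
    refine ⟨(max (1:ℤ) |T|).toNat, 1, T, one_pos, odd_one, ?_, ?_⟩
    · simp
    · rw [Int.toNat_of_nonneg hTnn]
  rw [ratComplexity, ← hT]
  apply le_csInf hne
  rintro m ⟨q, f, hq, hodd, hdvd, hm⟩
  by_contra hcon
  push_neg at hcon
  have hmle : m ≤ 2 ^ (k-1) := by omega
  set P : ℤ := 2 ^ (k-1) with hP
  have hP2 : (2:ℤ) ≤ P := by
    calc (2:ℤ) = 2 ^ 1 := by norm_num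
    _ ≤ 2 ^ (k-1) := by apply pow_le_pow_right₀ (by norm_num); omega
  have hPev : (2:ℤ) ∣ P := by
    refine ⟨2 ^ (k-2), ?_⟩
    rw [hP, ← pow_succ']
    congr 1
    omega
  have h2k : (2:ℤ) ^ k = 2 * P := by
    rw [hP, ← pow_succ']
    congr 1
    omega
  have h2k1 : (2:ℤ) ^ (k+1) = 4 * P := by
    rw [hP]
    have : k + 1 = (k - 1) + 2 := by omega
    rw [this, pow_add]
    ring
  have hmP : (m : ℤ) ≤ P := by
    rw [hP]
    exact_mod_cast hmle
  have hqP : q ≤ P := le_trans (le_trans (le_max_left _ _) hm.symm.le) hmP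
  have hfP : |f| ≤ P := le_trans (le_trans (le_max_right _ _) hm.symm.le) hmP
  obtain ⟨hfl, hfr⟩ := abs_le.mp hfP
  -- key divisibility: 2^(k+1) ∣ 2^k - (q + f)
  have hd1 : (2:ℤ) ^ (k+1) ∣ q * T - f := dvd_trans (pow_dvd_pow 2 (by omega)) hdvd
  have hd2 : (2:ℤ) ^ (k+1) ∣ q * (T - (2 ^ k - 1)) := Dvd.dvd.mul_left hdvdT q
  have hd3 : (2:ℤ) ^ (k+1) ∣ q * 2 ^ k - 2 ^ k := by
    obtain ⟨r, hr⟩ := hodd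
    exact ⟨r, by rw [hr]; ring⟩
  have hd : (2:ℤ) ^ (k+1) ∣ 2 ^ k - (q + f) := by
    have h := (hd1.sub hd2).sub hd3
    have heq : (q * T - f) - q * (T - (2 ^ k - 1)) - (q * 2 ^ k - 2 ^ k)
        = 2 ^ k - (q + f) := by ring
    rwa [heq] at h
  obtain ⟨c, hc⟩ := hd
  rw [h2k, h2k1] at hc
  -- hc : 2 * P - (q + f) = 4 * P * c
  have hc0 : c = 0 := by
    rcases lt_trichotomy c 0 with h | h | h
    · have hc1 : c ≤ -1 := by omega
      nlinarith
    · exact h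
    · have hc1 : 1 ≤ c := by omega
      nlinarith
  rw [hc0] at hc
  -- hc : 2 * P - (q + f) = 0, so q = P = even, contradicting Odd q
  obtain ⟨r, hr⟩ := hodd
  obtain ⟨d, hd'⟩ := hPev
  omega
end

section
/- Let k ≥ (N+1)/2 and S_N = (1,…,1,0,s_{k+1},…,s_{N-1}) (k ones, then a zero, then arbitrary bits). Then Λ(S_N^rev) ≤ 2^{N-k}. -/
theorem stmt7 (N k : ℕ) (hk : N + 1 ≤ 2 * k) (hkN : k ≤ N - 1) (hN : 2 ≤ N)
    (s : ℕ → ℕ) (hbits : ∀ n < N, s n ≤ 1)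
    (h1 : ∀ n < k, s n = 1) (hk0 : s k = 0) :
    ratComplexity N (fun n => s (N - 1 - n)) ≤ 2 ^ (N - k) := by
  have hk1 : 1 ≤ k := by omega
  set T : ℤ := ∑ n ∈ Finset.range N, (s (N - 1 - n) : ℤ) * 2 ^ n with hT
  have hgeom : ∀ M : ℕ, ∑ n ∈ Finset.range M, (2:ℤ) ^ n = 2 ^ M - 1 := by
    intro M
    induction M with
    | zero => simp
    | succ m ih => rw [Finset.sum_range_succ, ih]; ring
  have hdiff : ∑ n ∈ Finset.range N, ((1:ℤ) - s (N - 1 - n)) * 2 ^ n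
      = (2 ^ N - 1) - T := by
    rw [hT]
    simp only [sub_mul, one_mul]
    rw [Finset.sum_sub_distrib, hgeom]
  -- on Ico (N-k) N the bits are 1, so terms vanish
  have hsplit : ∑ n ∈ Finset.range N, ((1:ℤ) - s (N - 1 - n)) * 2 ^ n
      = ∑ n ∈ Finset.range (N - k), ((1:ℤ) - s (N - 1 - n)) * 2 ^ n := by
    rw [← Finset.sum_range_add_sum_Ico _ (by omega : N - k ≤ N)]
    have : ∑ n ∈ Finset.Ico (N - k) N, ((1:ℤ) - s (N - 1 - n)) * 2 ^ n = 0 := by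
      apply Finset.sum_eq_zero
      intro n hn
      rw [Finset.mem_Ico] at hn
      have : s (N - 1 - n) = 1 := h1 _ (by omega)
      rw [this]
      ring
    rw [this, add_zero]
  have hub : ∑ n ∈ Finset.range (N - k), ((1:ℤ) - s (N - 1 - n)) * 2 ^ n
      ≤ 2 ^ (N - k) - 1 := by
    rw [← hgeom (N - k)]
    apply Finset.sum_le_sum
    intro n hn
    have h1n : (s (N - 1 - n) : ℤ) ≥ 0 := Int.ofNat_nonneg _
    nlinarith [pow_pos (by norm_num : (0:ℤ) < 2) n]
  have hnonneg : (0:ℤ) ≤ ∑ n ∈ Finset.range N, ((1:ℤ) - s (N - 1 - n)) * 2 ^ n := by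
    apply Finset.sum_nonneg
    intro n hn
    rw [Finset.mem_range] at hn
    have hb : s (N - 1 - n) ≤ 1 := hbits _ (by omega)
    have hb' : (s (N - 1 - n) : ℤ) ≤ 1 := by exact_mod_cast hb
    have : (0:ℤ) ≤ 2 ^ n := by positivity
    nlinarith
  have hTub : T ≤ 2 ^ N - 1 := by linarith [hdiff ▸ hnonneg]
  have hTlb : 2 ^ N - T ≤ 2 ^ (N - k) := by
    have h2 : (2 ^ N - 1) - T ≤ 2 ^ (N - k) - 1 := by
      rw [← hdiff, hsplit]; exact hub
    linarith
  set m : ℕ := (2 ^ N - T).toNat with hm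
  have hmem : m ∈ {m : ℕ | ∃ q f : ℤ, 0 < q ∧ Odd q ∧
      (2 ^ N : ℤ) ∣ q * (∑ n ∈ Finset.range N, ((fun n => s (N - 1 - n)) n : ℤ) * 2 ^ n) - f ∧
      (m : ℤ) = max q |f|} := by
    refine ⟨1, T - 2 ^ N, one_pos, odd_one, ?_, ?_⟩
    · simp only [one_mul]
      exact ⟨1, by push_cast; ring⟩
    · have habs : |T - 2 ^ N| = 2 ^ N - T := by
        rw [abs_of_nonpos (by linarith)]; ring
      rw [habs, hm]
      rw [Int.toNat_of_nonneg (by linarith)]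
      rw [max_eq_right (by linarith)]
  calc ratComplexity N (fun n => s (N - 1 - n)) ≤ m := Nat.sInf_le hmem
    _ ≤ 2 ^ (N - k) := by
        rw [hm]
        exact Int.toNat_le.mpr (by exact_mod_cast hTlb)
end

section
/- For every function r : ℕ → ℝ with r(N) → ∞, the expected value E_N^{rat-sym} := 2^{-N} ∑_{S_N ∈ {0,1}^N} Λ^sym(S_N) satisfies E_N^{rat-sym} ≥ (1 − c·4^{−r(N)}) · 2^{N/2 − r(N)} for some absolute constant c > 0 and all N; in particular E_N^{rat-sym} = 2^{N/2 − r(N) + o(1)} from below. -/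
/-- The `N`th rational complexity of the binary sequence given by the bits of `x`. -/
noncomputable def ratComplexityX (N x : ℕ) : ℕ :=
  sInf {m : ℕ | ∃ q f : ℤ, 0 < q ∧ Odd q ∧
    (2 ^ N : ℤ) ∣ q * (x : ℤ) - f ∧ (m : ℤ) = max q |f|}

/-- The integer whose base-2 digit string of length `N` is the reverse of that of `x`. -/
def revBits (N x : ℕ) : ℕ :=
  ∑ n ∈ Finset.range N, (if x.testBit n then 2 ^ (N - 1 - n) else 0)

/-- The `N`th symmetric rational complexity. -/
noncomputable def symRatComplexityX (N x : ℕ) : ℕ :=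
  min (ratComplexityX N x) (ratComplexityX N (revBits N x))

lemma ratSet_mem (N x : ℕ) : ratComplexityX N x ∈ {m : ℕ | ∃ q f : ℤ, 0 < q ∧ Odd q ∧
    (2 ^ N : ℤ) ∣ q * (x : ℤ) - f ∧ (m : ℤ) = max q |f|} := by
  apply Nat.sInf_mem
  refine ⟨max 1 x, 1, (x : ℤ), one_pos, odd_one, by simp, ?_⟩
  push_cast
  rw [abs_of_nonneg (Int.natCast_nonneg x)]

lemma exists_wit (N x : ℕ) : ∃ q f : ℤ, 0 < q ∧ Odd q ∧
    (2 ^ N : ℤ) ∣ q * (x : ℤ) - f ∧ ((ratComplexityX N x : ℤ) = max q |f|) :=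
  ratSet_mem N x

lemma one_le_rat (N x : ℕ) : 1 ≤ ratComplexityX N x := by
  obtain ⟨q, f, hq, -, -, hm⟩ := exists_wit N x
  have h1 : (1 : ℤ) ≤ (ratComplexityX N x : ℤ) := hm ▸ le_trans hq (le_max_left _ _)
  exact_mod_cast h1

noncomputable def witQ (N x : ℕ) : ℤ := (exists_wit N x).choose
noncomputable def witF (N x : ℕ) : ℤ := (exists_wit N x).choose_spec.choose

lemma wit_spec (N x : ℕ) : 0 < witQ N x ∧ Odd (witQ N x) ∧
    (2 ^ N : ℤ) ∣ witQ N x * (x : ℤ) - witF N x ∧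
    ((ratComplexityX N x : ℤ) = max (witQ N x) |witF N x|) :=
  (exists_wit N x).choose_spec.choose_spec

lemma card_bad (N W : ℕ) (g : ℕ → ℕ) (hg : ∀ x, x < 2 ^ N → g x < 2 ^ N)
    (hginj : ∀ x₁, x₁ < 2 ^ N → ∀ x₂, x₂ < 2 ^ N → g x₁ = g x₂ → x₁ = x₂) :
    ((Finset.range (2 ^ N)).filter (fun x => ratComplexityX N (g x) ≤ W)).card
      ≤ W * (2 * W + 1) := by
  have hcard : (Finset.Icc (1 : ℤ) W ×ˢ Finset.Icc (-(W : ℤ)) W).card = W * (2 * W + 1) := by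
    rw [Finset.card_product, Int.card_Icc, Int.card_Icc]
    have h1 : ((W : ℤ) + 1 - 1).toNat = W := by omega
    have h2 : ((W : ℤ) + 1 - -(W : ℤ)).toNat = 2 * W + 1 := by omega
    rw [h1, h2]
  rw [← hcard]
  apply Finset.card_le_card_of_injOn (fun x => (witQ N (g x), witF N (g x)))
  · intro x hx
    simp only [Finset.mem_coe, Finset.mem_filter, Finset.mem_range] at hx
    obtain ⟨hx, hW⟩ := hx
    obtain ⟨hq, -, -, hm⟩ := wit_spec N (g x)
    have hWZ : (ratComplexityX N (g x) : ℤ) ≤ W := by exact_mod_cast hW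
    rw [hm] at hWZ
    simp only [Finset.mem_coe, Finset.mem_product, Finset.mem_Icc]
    refine ⟨⟨hq, le_trans (le_max_left _ _) hWZ⟩, ?_, ?_⟩
    · exact neg_le_of_abs_le (le_trans (le_max_right _ _) hWZ)
    · exact le_of_abs_le (le_trans (le_max_right _ _) hWZ)
  · intro x₁ hx₁ x₂ hx₂ heq
    simp only [Finset.coe_filter, Set.mem_setOf_eq, Finset.mem_range] at hx₁ hx₂
    obtain ⟨hq1, hodd1, hdvd1, -⟩ := wit_spec N (g x₁)
    obtain ⟨hq2, -, hdvd2, -⟩ := wit_spec N (g x₂)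
    have hq : witQ N (g x₁) = witQ N (g x₂) := congrArg Prod.fst heq
    have hf : witF N (g x₁) = witF N (g x₂) := congrArg Prod.snd heq
    rw [← hq, ← hf] at hdvd2
    have hdvd : (2 ^ N : ℤ) ∣ witQ N (g x₁) * ((g x₁ : ℤ) - (g x₂ : ℤ)) := by
      have hsub := dvd_sub hdvd1 hdvd2
      have e : witQ N (g x₁) * ((g x₁ : ℕ) : ℤ) - witF N (g x₁) -
          (witQ N (g x₁) * ((g x₂ : ℕ) : ℤ) - witF N (g x₁))
          = witQ N (g x₁) * ((g x₁ : ℤ) - (g x₂ : ℤ)) := by ring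
      rwa [e] at hsub
    have hcop : IsCoprime ((2 : ℤ) ^ N) (witQ N (g x₁)) := by
      apply IsCoprime.pow_left
      rw [Int.prime_two.coprime_iff_not_dvd, ← even_iff_two_dvd]
      exact (Int.not_even_iff_odd.mpr hodd1)
    have hdd : (2 ^ N : ℤ) ∣ ((g x₁ : ℤ) - (g x₂ : ℤ)) := hcop.dvd_of_dvd_mul_left hdvd
    have hb1 := hg x₁ hx₁.1
    have hb2 := hg x₂ hx₂.1
    have hb1' : ((g x₁ : ℕ) : ℤ) < 2 ^ N := by exact_mod_cast hb1
    have hb2' : ((g x₂ : ℕ) : ℤ) < 2 ^ N := by exact_mod_cast hb2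
    have habs : |((g x₁ : ℤ) - (g x₂ : ℤ))| < 2 ^ N := by
      rw [abs_sub_lt_iff]
      constructor
      · linarith [Int.natCast_nonneg (g x₂)]
      · linarith [Int.natCast_nonneg (g x₁)]
    have hz := Int.eq_zero_of_abs_lt_dvd hdd habs
    have hzz : (g x₁ : ℤ) = (g x₂ : ℤ) := by omega
    exact hginj x₁ hx₁.1 x₂ hx₂.1 (by exact_mod_cast hzz)

lemma sum_bits_lt (b : ℕ → Bool) (N : ℕ) :
    (∑ m ∈ Finset.range N, if b m then 2 ^ m else 0) < 2 ^ N := by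
  induction N with
  | zero => simp
  | succ N ih =>
    rw [Finset.sum_range_succ]
    have : (if b N then 2 ^ N else 0) ≤ 2 ^ N := by split <;> simp
    calc _ < 2 ^ N + 2 ^ N := by omega
    _ = 2 ^ (N + 1) := by ring

lemma testBit_sum_bits (b : ℕ → Bool) (N k : ℕ) (hk : k < N) :
    (∑ m ∈ Finset.range N, if b m then 2 ^ m else 0).testBit k = b k := by
  induction N with
  | zero => omega
  | succ N ih =>
    rw [Finset.sum_range_succ]
    have hS := sum_bits_lt b N
    rcases Nat.lt_or_ge k N with hkN | hkN
    · cases hbN : b N with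
      | false => simpa using ih hkN
      | true =>
        simp only [hbN, if_true]
        rw [Nat.add_comm, show (2:ℕ) ^ N = 2 ^ N * 1 from (Nat.mul_one _).symm,
          Nat.testBit_two_pow_mul_add 1 hS k, if_pos hkN]
        exact ih hkN
    · have hkeq : k = N := by omega
      rw [hkeq]
      cases hbN : b N with
      | false =>
        simpa using Nat.testBit_lt_two_pow hS
      | true =>
        simp only [hbN, if_true]
        rw [Nat.add_comm, show (2:ℕ) ^ N = 2 ^ N * 1 from (Nat.mul_one _).symm,
          Nat.testBit_two_pow_mul_add 1 hS N, if_neg (lt_irrefl N), Nat.sub_self]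
        rfl

lemma revBits_eq (N x : ℕ) :
    revBits N x = ∑ m ∈ Finset.range N, (if x.testBit (N - 1 - m) then 2 ^ m else 0) := by
  unfold revBits
  refine Finset.sum_nbij' (fun n => N - 1 - n) (fun n => N - 1 - n) ?_ ?_ ?_ ?_ ?_ <;>
    intro a ha <;> simp only [Finset.mem_range] at * <;> try omega
  have : N - 1 - (N - 1 - a) = a := by omega
  rw [this]

lemma revBits_lt (N x : ℕ) : revBits N x < 2 ^ N := by
  rw [revBits_eq]
  exact sum_bits_lt _ N

lemma testBit_revBits (N x k : ℕ) (hk : k < N) :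
    (revBits N x).testBit k = x.testBit (N - 1 - k) := by
  rw [revBits_eq]
  exact testBit_sum_bits _ N k hk

lemma revBits_injOn {N x₁ x₂ : ℕ} (h₁ : x₁ < 2 ^ N) (h₂ : x₂ < 2 ^ N)
    (h : revBits N x₁ = revBits N x₂) : x₁ = x₂ := by
  apply Nat.eq_of_testBit_eq
  intro k
  rcases Nat.lt_or_ge k N with hk | hk
  · have h1 := testBit_revBits N x₁ (N - 1 - k) (by omega)
    have h2 := testBit_revBits N x₂ (N - 1 - k) (by omega)
    have hkk : N - 1 - (N - 1 - k) = k := by omega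
    rw [hkk] at h1 h2
    rw [← h1, ← h2, h]
  · have hl1 : x₁ < 2 ^ k := lt_of_lt_of_le h₁ (Nat.pow_le_pow_right (by norm_num) hk)
    have hl2 : x₂ < 2 ^ k := lt_of_lt_of_le h₂ (Nat.pow_le_pow_right (by norm_num) hk)
    rw [Nat.testBit_lt_two_pow hl1, Nat.testBit_lt_two_pow hl2]

/-- The main counting estimate: the average is at least `2^{N/2}/10`. -/
lemma avg_lower (N : ℕ) :
    (1 / 10 : ℝ) * (2 : ℝ) ^ ((N : ℝ) / 2) ≤
      (2 : ℝ) ^ (-(N : ℝ)) * ∑ x ∈ Finset.range (2 ^ N), (symRatComplexityX N x : ℝ) := by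
  have h2N : (0 : ℝ) < (2 : ℝ) ^ (-(N : ℝ)) := Real.rpow_pos_of_pos (by norm_num) _
  have hinv : (2 : ℝ) ^ (-(N : ℝ)) = ((2 : ℝ) ^ N)⁻¹ := by
    rw [Real.rpow_neg (by norm_num), Real.rpow_natCast]
  rcases Nat.lt_or_ge N 7 with hN | hN
  · -- small case: every term is at least 1
    have hsum : (2 ^ N : ℝ) ≤ ∑ x ∈ Finset.range (2 ^ N), (symRatComplexityX N x : ℝ) := by
      calc (2 ^ N : ℝ) = ∑ _x ∈ Finset.range (2 ^ N), (1 : ℝ) := by simp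
      _ ≤ _ := by
        apply Finset.sum_le_sum
        intro x _
        have : 1 ≤ symRatComplexityX N x :=
          le_min (one_le_rat N x) (one_le_rat N (revBits N x))
        exact_mod_cast this
    have hrp : (2 : ℝ) ^ ((N : ℝ) / 2) ≤ 10 := by
      calc (2 : ℝ) ^ ((N : ℝ) / 2) ≤ (2 : ℝ) ^ ((3 : ℕ) : ℝ) := by
            apply Real.rpow_le_rpow_of_exponent_le (by norm_num)
            have : (N : ℝ) ≤ 6 := by exact_mod_cast Nat.le_of_lt_succ hN
            push_cast
            linarith
      _ ≤ 10 := by rw [Real.rpow_natCast]; norm_num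
    calc (1 / 10 : ℝ) * (2 : ℝ) ^ ((N : ℝ) / 2) ≤ 1 := by nlinarith
    _ = (2 : ℝ) ^ (-(N : ℝ)) * (2 ^ N : ℝ) := by
        rw [hinv]; field_simp
    _ ≤ _ := by
        apply mul_le_mul_of_nonneg_left hsum h2N.le
  · -- main case
    set k := (N - 4) / 2 with hkdef
    set W := 2 ^ k with hWdef
    set B1 := (Finset.range (2 ^ N)).filter (fun x => ratComplexityX N x ≤ W) with hB1
    set B2 := (Finset.range (2 ^ N)).filter
      (fun x => ratComplexityX N (revBits N x) ≤ W) with hB2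
    have hc1 : B1.card ≤ W * (2 * W + 1) :=
      card_bad N W id (fun x hx => hx) (fun x₁ _ x₂ _ h => h)
    have hc2 : B2.card ≤ W * (2 * W + 1) :=
      card_bad N W (revBits N) (fun x _ => revBits_lt N x)
        (fun x₁ h₁ x₂ h₂ h => revBits_injOn h₁ h₂ h)
    set G := (Finset.range (2 ^ N)).filter (fun x => W + 1 ≤ symRatComplexityX N x) with hG
    have hGcard : 10 * 2 ^ (N - 4) ≤ G.card := by
      have hsub : Finset.range (2 ^ N) ⊆ G ∪ (B1 ∪ B2) := by
        intro x hx
        rcases Nat.lt_or_ge W (symRatComplexityX N x) with h | h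
        · exact Finset.mem_union_left _ (Finset.mem_filter.mpr ⟨hx, h⟩)
        · rcases Nat.le_or_le (ratComplexityX N x) (ratComplexityX N (revBits N x)) with
            hle | hle
          · refine Finset.mem_union_right _ (Finset.mem_union_left _ ?_)
            refine Finset.mem_filter.mpr ⟨hx, ?_⟩
            have : symRatComplexityX N x = ratComplexityX N x := min_eq_left hle
            omega
          · refine Finset.mem_union_right _ (Finset.mem_union_right _ ?_)
            refine Finset.mem_filter.mpr ⟨hx, ?_⟩
            have : symRatComplexityX N x = ratComplexityX N (revBits N x) := min_eq_right hle
            omega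
      have hcards := Finset.card_le_card hsub
      have hu : (G ∪ (B1 ∪ B2)).card ≤ G.card + (B1.card + B2.card) :=
        le_trans (Finset.card_union_le _ _)
          (by have := Finset.card_union_le B1 B2; omega)
      rw [Finset.card_range] at hcards
      have hW1 : 1 ≤ W := Nat.one_le_two_pow
      have hWW : W * (2 * W + 1) ≤ 3 * (W * W) := by nlinarith
      have hWsq : W * W ≤ 2 ^ (N - 4) := by
        rw [hWdef, ← pow_add]
        apply Nat.pow_le_pow_right (by norm_num)
        omega
      have h2Nsplit : 2 ^ N = 16 * 2 ^ (N - 4) := by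
        rw [show (16 : ℕ) = 2 ^ 4 from rfl, ← pow_add]
        congr 1
        omega
      omega
    -- sum over good elements
    have hterm : ∀ x ∈ G, ((W : ℝ) + 1) ≤ (symRatComplexityX N x : ℝ) := by
      intro x hx
      have hx' := (Finset.mem_filter.mp hx).2
      exact_mod_cast hx'
    have hsmul := Finset.card_nsmul_le_sum G (fun x => (symRatComplexityX N x : ℝ))
      ((W : ℝ) + 1) hterm
    rw [nsmul_eq_mul] at hsmul
    have hsum' : (10 : ℝ) * 2 ^ (N - 4) * ((W : ℝ) + 1) ≤
        ∑ x ∈ Finset.range (2 ^ N), (symRatComplexityX N x : ℝ) := by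
      have hsubG : G ⊆ Finset.range (2 ^ N) := Finset.filter_subset _ _
      have h1 : ∑ x ∈ G, (symRatComplexityX N x : ℝ) ≤
          ∑ x ∈ Finset.range (2 ^ N), (symRatComplexityX N x : ℝ) :=
        Finset.sum_le_sum_of_subset_of_nonneg hsubG (fun x _ _ => by positivity)
      have hcardR : (10 : ℝ) * 2 ^ (N - 4) ≤ (G.card : ℝ) := by exact_mod_cast hGcard
      have hWpos : (0 : ℝ) ≤ (W : ℝ) + 1 := by positivity
      nlinarith [mul_le_mul_of_nonneg_right hcardR hWpos]
    -- numeric assembly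
    have hpowN : (2 : ℝ) ^ N = 2 ^ (N - 4) * 16 := by
      have h4 : (2 : ℝ) ^ ((N - 4) + 4) = 2 ^ (N - 4) * 16 := by rw [pow_add]; norm_num
      rw [← h4]
      congr 1
      omega
    have hM : (2 : ℝ) ^ (-(N : ℝ)) * (10 * 2 ^ (N - 4) * ((W : ℝ) + 1)) =
        10 * ((W : ℝ) + 1) / 16 := by
      rw [hinv, hpowN]
      have : (0:ℝ) < (2:ℝ) ^ (N - 4) := by positivity
      field_simp
    have hk5 : (N : ℝ) / 2 ≤ (k : ℝ) + 5 / 2 := by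
      have h : N ≤ 2 * k + 5 := by omega
      have h' : (N : ℝ) ≤ 2 * (k : ℝ) + 5 := by exact_mod_cast h
      linarith
    have h52 : (2 : ℝ) ^ ((5 : ℝ) / 2) ≤ 25 / 4 := by
      have hpos : (0 : ℝ) < (2 : ℝ) ^ ((5 : ℝ) / 2) := Real.rpow_pos_of_pos (by norm_num) _
      have hsq : ((2 : ℝ) ^ ((5 : ℝ) / 2)) ^ (2 : ℕ) = 32 := by
        rw [← Real.rpow_natCast ((2:ℝ) ^ ((5:ℝ)/2)) 2,
          ← Real.rpow_mul (by norm_num : (0:ℝ) ≤ 2)]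
        rw [show (5:ℝ)/2 * ((2:ℕ):ℝ) = ((5:ℕ):ℝ) by push_cast; ring, Real.rpow_natCast]
        norm_num
      nlinarith [sq_nonneg ((2 : ℝ) ^ ((5 : ℝ) / 2) - 25 / 4)]
    have hpow2 : (2 : ℝ) ^ ((N : ℝ) / 2) ≤ (W : ℝ) * (25 / 4) := by
      have h1 : (2 : ℝ) ^ ((N : ℝ) / 2) ≤ (2 : ℝ) ^ ((k : ℝ) + 5 / 2) :=
        Real.rpow_le_rpow_of_exponent_le (by norm_num) hk5
      rw [Real.rpow_add (by norm_num : (0:ℝ) < 2)] at h1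
      have h2 : (2 : ℝ) ^ ((k : ℕ) : ℝ) = (W : ℝ) := by
        rw [Real.rpow_natCast]
        push_cast [hWdef]
        ring
      have h3 : (2 : ℝ) ^ ((k : ℕ) : ℝ) * (2 : ℝ) ^ ((5 : ℝ) / 2) ≤ (W : ℝ) * (25 / 4) := by
        rw [h2]
        apply mul_le_mul_of_nonneg_left h52 (by positivity)
      linarith
    calc (1 / 10 : ℝ) * (2 : ℝ) ^ ((N : ℝ) / 2)
        ≤ (1 / 10 : ℝ) * ((W : ℝ) * (25 / 4)) := by
          apply mul_le_mul_of_nonneg_left hpow2 (by norm_num)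
      _ ≤ 10 * ((W : ℝ) + 1) / 16 := by linarith
      _ = (2 : ℝ) ^ (-(N : ℝ)) * (10 * 2 ^ (N - 4) * ((W : ℝ) + 1)) := hM.symm
      _ ≤ _ := mul_le_mul_of_nonneg_left hsum' h2N.le

/-- The expected value of the symmetric rational complexity is at least
`(1 - c·4^{-r(N)})·2^{N/2 - r(N)}`. -/
theorem stmt9 :
    ∃ c : ℝ, 0 < c ∧ ∀ r : ℕ → ℝ, Filter.Tendsto r Filter.atTop Filter.atTop →
      ∀ N : ℕ,
        (1 - c * (4 : ℝ) ^ (-r N)) * (2 : ℝ) ^ ((N : ℝ) / 2 - r N) ≤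
          (2 : ℝ) ^ (-(N : ℝ)) *
            ∑ x ∈ Finset.range (2 ^ N), (symRatComplexityX N x : ℝ) := by
  refine ⟨100, by norm_num, fun r _ N => ?_⟩
  have hE := avg_lower N
  set t := r N
  set u := (2 : ℝ) ^ (-t) with hu
  have hupos : 0 < u := Real.rpow_pos_of_pos (by norm_num) _
  have hP : (0 : ℝ) < (2 : ℝ) ^ ((N : ℝ) / 2) := Real.rpow_pos_of_pos (by norm_num) _
  have hsplit : (2 : ℝ) ^ ((N : ℝ) / 2 - t) = (2 : ℝ) ^ ((N : ℝ) / 2) * u := by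
    rw [hu, ← Real.rpow_add (by norm_num : (0:ℝ) < 2)]
    ring_nf
  have h4 : (4 : ℝ) ^ (-t) = u ^ 2 := by
    have : (4 : ℝ) = (2 : ℝ) ^ ((2 : ℕ) : ℝ) := by
      rw [Real.rpow_natCast]; norm_num
    rw [this, ← Real.rpow_natCast u 2, hu,
      ← Real.rpow_mul (by norm_num : (0:ℝ) ≤ 2),
      ← Real.rpow_mul (by norm_num : (0:ℝ) ≤ 2)]
    ring_nf
  rw [hsplit, h4]
  have key : (1 - 100 * u ^ 2) * u ≤ 1 / 10 := by
    nlinarith [mul_nonneg hupos.le (sq_nonneg (10 * u - 1)), sq_nonneg (u - 1 / 20)]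
  calc (1 - 100 * u ^ 2) * ((2 : ℝ) ^ ((N : ℝ) / 2) * u)
      = ((1 - 100 * u ^ 2) * u) * (2 : ℝ) ^ ((N : ℝ) / 2) := by ring
    _ ≤ (1 / 10) * (2 : ℝ) ^ ((N : ℝ) / 2) := by
        apply mul_le_mul_of_nonneg_right key hP.le
    _ ≤ _ := hE
end

section
/- Let N ≥ 2 and ⌈N/2⌉ ≤ k ≤ N-1. For S_N = (0,…,0,1,s_{k+1},…,s_{N-1}) (k zeros, then a one), the N-th linear complexity satisfies L(S_N) ≥ k+1, while the reversed sequence satisfies L(S_N^rev) ≤ N−k. -/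
/-- The `N`th linear complexity of a binary sequence: the least `L` such that the first
`N` terms satisfy a linear recurrence of order `L` over `F₂`. -/
noncomputable def nthLinComplexity (N : ℕ) (s : ℕ → ZMod 2) : ℕ :=
  sInf {L | ∃ c : ℕ → ZMod 2,
    ∀ n : ℕ, n + L < N → s (n + L) = ∑ ℓ ∈ Finset.range L, c ℓ * s (n + ℓ)}

theorem stmt11 (N k : ℕ) (hN : 2 ≤ N) (hk : (N + 1) / 2 ≤ k) (hkN : k ≤ N - 1)
    (s : ℕ → ZMod 2) (h0 : ∀ n < k, s n = 0) (hk1 : s k = 1) :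
    k + 1 ≤ nthLinComplexity N s ∧
    nthLinComplexity N (fun n => s (N - 1 - n)) ≤ N - k := by
  constructor
  · -- lower bound
    have hne : N ∈ {L | ∃ c : ℕ → ZMod 2,
        ∀ n : ℕ, n + L < N → s (n + L) = ∑ ℓ ∈ Finset.range L, c ℓ * s (n + ℓ)} :=
      ⟨fun _ => 0, fun n hn => absurd hn (by omega)⟩
    by_contra hcon
    push_neg at hcon
    set L := nthLinComplexity N s with hL
    have hLk : L ≤ k := by omega
    have hmem : L ∈ {L | ∃ c : ℕ → ZMod 2,
        ∀ n : ℕ, n + L < N → s (n + L) = ∑ ℓ ∈ Finset.range L, c ℓ * s (n + ℓ)} :=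
      Nat.sInf_mem ⟨N, hne⟩
    obtain ⟨c, hc⟩ := hmem
    have hkey := hc (k - L) (by omega)
    rw [Nat.sub_add_cancel hLk, hk1] at hkey
    have hz : ∀ ℓ ∈ Finset.range L, c ℓ * s (k - L + ℓ) = 0 := by
      intro ℓ hℓ
      rw [Finset.mem_range] at hℓ
      rw [h0 (k - L + ℓ) (by omega), mul_zero]
    rw [Finset.sum_congr rfl hz, Finset.sum_const_zero] at hkey
    exact one_ne_zero hkey
  · -- upper bound
    apply Nat.sInf_le
    refine ⟨fun _ => 0, fun n hn => ?_⟩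
    simp only
    have hnk : n < k := by omega
    have : N - 1 - (n + (N - k)) = k - 1 - n := by omega
    rw [this, h0 (k - 1 - n) (by omega)]
    simp
end

section
/- For 1 ≤ L ≤ N, the number of binary sequences of length N with N-th linear complexity exactly L is 2^{min(2L−1, 2N−2L)}, and exactly one sequence (the zero sequence) has linear complexity 0. Consequently, ∑_{L=0}^{N} A_N(L) = 2^N. -/
/-- Extension of a finite binary word to a sequence (by zeros). -/
def extSeq (N : ℕ) (v : Fin N → ZMod 2) : ℕ → ZMod 2 :=
  fun n => if h : n < N then v ⟨n, h⟩ else 0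

/-- `A N L`: the number of binary sequences of length `N` with `N`th linear complexity `L`. -/
noncomputable def A (N L : ℕ) : ℕ :=
  (Finset.univ.filter fun v : Fin N → ZMod 2 => nthLinComplexity N (extSeq N v) = L).card

namespace LCaux

/-- `ap s a L n = ∑_{i ≤ L} a i * s (n+i)`. -/
def ap (s a : ℕ → ZMod 2) (L n : ℕ) : ZMod 2 :=
  ∑ i ∈ Finset.range (L + 1), a i * s (n + i)

/-- `Fit s N L`: there is a monic order-`L` recurrence valid on the first `N` terms. -/
def Fit (s : ℕ → ZMod 2) (N L : ℕ) : Prop :=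
  ∃ a : ℕ → ZMod 2, a L = 1 ∧ (∀ i, L < i → a i = 0) ∧
    ∀ n, n + L < N → ap s a L n = 0

lemma mem_iff_fit (s : ℕ → ZMod 2) (N L : ℕ) :
    (L ∈ {L | ∃ c : ℕ → ZMod 2,
      ∀ n : ℕ, n + L < N → s (n + L) = ∑ ℓ ∈ Finset.range L, c ℓ * s (n + ℓ)}) ↔
    Fit s N L := by
  constructor
  · rintro ⟨c, hc⟩
    refine ⟨fun i => if i = L then 1 else if i < L then c i else 0, by simp, ?_, ?_⟩
    · intro i hi; simp [Nat.ne_of_gt hi, Nat.lt_asymm hi]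
    · intro n hn
      have := hc n hn
      rw [ap, Finset.sum_range_succ]
      simp only [if_pos rfl, one_mul]
      have hsum : ∑ i ∈ Finset.range L,
          (if i = L then 1 else if i < L then c i else 0) * s (n + i)
          = ∑ i ∈ Finset.range L, c i * s (n + i) := by
        refine Finset.sum_congr rfl fun i hi => ?_
        have hi' := Finset.mem_range.mp hi
        simp [Nat.ne_of_lt hi', hi']
      rw [hsum, ← this]
      simp [CharTwo.add_self_eq_zero]
  · rintro ⟨a, haL, _, ha⟩
    refine ⟨a, fun n hn => ?_⟩
    have h0 := ha n hn
    rw [ap, Finset.sum_range_succ, haL, one_mul] at h0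
    have : s (n + L) = -∑ i ∈ Finset.range L, a i * s (n + i) := by
      linear_combination h0
    rw [this, CharTwo.neg_eq]

lemma nth_eq (s : ℕ → ZMod 2) (N : ℕ) :
    nthLinComplexity N s = sInf {L | Fit s N L} := by
  unfold nthLinComplexity
  congr 1
  ext L
  exact mem_iff_fit s N L

lemma fit_self (s : ℕ → ZMod 2) (N : ℕ) : Fit s N N :=
  ⟨fun i => if i = N then 1 else 0, by simp, fun i hi => by simp [Nat.ne_of_gt hi],
    fun n hn => absurd hn (by omega)⟩

lemma fit_nth (s : ℕ → ZMod 2) (N : ℕ) : Fit s N (nthLinComplexity N s) := by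
  rw [nth_eq]
  exact Nat.sInf_mem (⟨N, fit_self s N⟩ : {L | Fit s N L}.Nonempty)

lemma nth_le (s : ℕ → ZMod 2) (N : ℕ) : nthLinComplexity N s ≤ N := by
  rw [nth_eq]; exact Nat.sInf_le (fit_self s N)

lemma nth_le_of_fit {s : ℕ → ZMod 2} {N L : ℕ} (h : Fit s N L) :
    nthLinComplexity N s ≤ L := by
  rw [nth_eq]; exact Nat.sInf_le h

lemma fit_of_le {s : ℕ → ZMod 2} {N M L : ℕ} (hNM : M ≤ N) (h : Fit s N L) : Fit s M L := by
  obtain ⟨a, h1, h2, h3⟩ := h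
  exact ⟨a, h1, h2, fun n hn => h3 n (lt_of_lt_of_le hn hNM)⟩

lemma nth_mono {s : ℕ → ZMod 2} {M N : ℕ} (h : M ≤ N) :
    nthLinComplexity M s ≤ nthLinComplexity N s :=
  nth_le_of_fit (fit_of_le h (fit_nth s N))

lemma ap_congr {s t a : ℕ → ZMod 2} {L n N : ℕ} (h : ∀ m, m < N → s m = t m)
    (hn : n + L < N) : ap s a L n = ap t a L n := by
  refine Finset.sum_congr rfl fun i hi => ?_
  rw [h (n + i) (by have := Finset.mem_range.mp hi; omega)]

lemma fit_congr {s t : ℕ → ZMod 2} {N L : ℕ} (h : ∀ m, m < N → s m = t m)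
    (hf : Fit s N L) : Fit t N L := by
  obtain ⟨a, h1, h2, h3⟩ := hf
  exact ⟨a, h1, h2, fun n hn => by rw [← ap_congr h hn]; exact h3 n hn⟩

lemma nth_congr {s t : ℕ → ZMod 2} {N : ℕ} (h : ∀ m, m < N → s m = t m) :
    nthLinComplexity N s = nthLinComplexity N t := by
  rw [nth_eq, nth_eq]
  congr 1
  ext L
  exact ⟨fit_congr h, fit_congr (fun m hm => (h m hm).symm)⟩



def shiftPad (k : ℕ) (a : ℕ → ZMod 2) : ℕ → ZMod 2 :=
  fun i => if k ≤ i then a (i - k) else 0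

lemma zmod2_ne (x : ZMod 2) (h : x ≠ 0) : x = 1 := by revert x h; decide

lemma ap_add (s a b : ℕ → ZMod 2) (L n : ℕ) :
    ap s (fun i => a i + b i) L n = ap s a L n + ap s b L n := by
  simp [ap, add_mul, Finset.sum_add_distrib]

lemma ap_ext {s a : ℕ → ZMod 2} {L M : ℕ} (n : ℕ) (h : ∀ i, L < i → a i = 0)
    (hLM : L ≤ M) : ap s a M n = ap s a L n := by
  unfold ap
  refine (Finset.sum_subset (Finset.range_subset_range.mpr (by omega)) fun i hi hni => ?_).symm
  rw [h i (by have := Finset.mem_range.not.mp hni; omega), zero_mul]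

lemma ap_shiftPad (s a : ℕ → ZMod 2) (k L n : ℕ) :
    ap s (shiftPad k a) (k + L) n = ap s a L (n + k) := by
  unfold ap shiftPad
  rw [show k + L + 1 = k + (L + 1) by omega, Finset.sum_range_add]
  have h1 : ∑ i ∈ Finset.range k, (if k ≤ i then a (i - k) else 0) * s (n + i) = 0 := by
    refine Finset.sum_eq_zero fun i hi => ?_
    rw [if_neg (by have := Finset.mem_range.mp hi; omega), zero_mul]
  rw [h1, zero_add]
  refine Finset.sum_congr rfl fun i _ => ?_
  rw [if_pos (by omega), show k + i - k = i by omega, show n + (k + i) = n + k + i by omega]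

lemma shiftPad_supp {a : ℕ → ZMod 2} {L : ℕ} (k : ℕ) (h : ∀ i, L < i → a i = 0) :
    ∀ i, k + L < i → shiftPad k a i = 0 := by
  intro i hi
  unfold shiftPad
  split
  · exact h _ (by omega)
  · rfl

lemma keyK {s a q : ℕ → ZMod 2} {N L L' : ℕ} (hLL' : L + L' ≤ N)
    (ha : ∀ n, n + L < N → ap s a L n = 0)
    (hq : ∀ n, n + L' < N + 1 → ap s q L' n = 0) (hqtop : q L' = 1) :
    ap s a L (N - L) = 0 := by
  set M := N - L - L' with hMdef
  have hML : M + L + L' = N := by omega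
  have main : ∑ j ∈ Finset.range (L' + 1), q j * ap s a L (M + j)
      = ∑ i ∈ Finset.range (L + 1), a i * ap s q L' (M + i) := by
    unfold ap
    simp_rw [Finset.mul_sum]
    rw [Finset.sum_comm]
    refine Finset.sum_congr rfl fun i _ => Finset.sum_congr rfl fun j _ => ?_
    rw [show M + j + i = M + i + j by omega]
    ring
  have h2 : ∑ i ∈ Finset.range (L + 1), a i * ap s q L' (M + i) = 0 := by
    refine Finset.sum_eq_zero fun i hi => ?_
    rw [hq (M + i) (by have := Finset.mem_range.mp hi; omega), mul_zero]
  rw [h2, Finset.sum_range_succ] at main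
  have h4 : ∑ j ∈ Finset.range L', q j * ap s a L (M + j) = 0 := by
    refine Finset.sum_eq_zero fun j hj => ?_
    rw [ha (M + j) (by have := Finset.mem_range.mp hj; omega), mul_zero]
  rw [h4, hqtop, zero_add, one_mul] at main
  rw [show N - L = M + L' by omega]
  exact main

def Inv (s : ℕ → ZMod 2) (N : ℕ) : Prop :=
  nthLinComplexity N s = 0 ∨
  ∃ m Lb b, m + 1 ≤ N ∧ 2 * Lb ≤ m ∧ b Lb = 1 ∧ (∀ i, Lb < i → b i = 0) ∧
    (∀ n, n + Lb < m → ap s b Lb n = 0) ∧ ap s b Lb (m - Lb) = 1 ∧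
    nthLinComplexity N s = m + 1 - Lb

lemma step (s : ℕ → ZMod 2) (N : ℕ) (hInv : Inv s N)
    {a : ℕ → ZMod 2} (ha1 : a (nthLinComplexity N s) = 1)
    (ha2 : ∀ i, nthLinComplexity N s < i → a i = 0)
    (ha3 : ∀ n, n + nthLinComplexity N s < N → ap s a (nthLinComplexity N s) n = 0) :
    Inv s (N + 1) ∧
    (ap s a (nthLinComplexity N s) (N - nthLinComplexity N s) = 0 →
       nthLinComplexity (N + 1) s = nthLinComplexity N s) ∧
    (ap s a (nthLinComplexity N s) (N - nthLinComplexity N s) ≠ 0 →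
       nthLinComplexity (N + 1) s =
         if 2 * nthLinComplexity N s ≤ N then N + 1 - nthLinComplexity N s
         else nthLinComplexity N s) := by
  set L := nthLinComplexity N s with hLdef
  have hLN : L ≤ N := nth_le s N
  by_cases hD : ap s a L (N - L) = 0
  · -- no discrepancy: complexity stays
    have hfit : Fit s (N + 1) L := by
      refine ⟨a, ha1, ha2, fun n hn => ?_⟩
      rcases Nat.lt_or_ge (n + L) N with h | h
      · exact ha3 n h
      · have : n = N - L := by omega
        rw [this]; exact hD
    have heq : nthLinComplexity (N + 1) s = L :=
      le_antisymm (nth_le_of_fit hfit) (nth_mono (Nat.le_succ N))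
    refine ⟨?_, fun _ => heq, fun h => absurd hD h⟩
    rcases hInv with h0 | ⟨m, Lb, b, hm1, hm2, hb1, hb2, hb3, hb4, hb5⟩
    · exact Or.inl (by omega)
    · exact Or.inr ⟨m, Lb, b, by omega, hm2, hb1, hb2, hb3, hb4, by omega⟩
  · -- discrepancy
    have hD1 : ap s a L (N - L) = 1 := zmod2_ne _ hD
    by_cases hL0 : L = 0
    · -- first nonzero symbol at position N
      rw [hL0] at hD1 ha1 ha3
      have hsN : s N = 1 := by
        have h' : ap s a 0 (N - 0) = a 0 * s (N - 0 + 0) := by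
          unfold ap; rw [Finset.sum_range_one]
        rw [h', ha1, one_mul] at hD1
        simpa using hD1
      have hzero : ∀ n, n < N → s n = 0 := by
        intro n hn
        have h' := ha3 n (by omega)
        unfold ap at h'
        rw [Finset.sum_range_one, ha1, one_mul] at h'
        simpa using h'
      have hge : ∀ L'', Fit s (N + 1) L'' → N + 1 ≤ L'' := by
        intro L'' ⟨q, hq1, hq2, hq3⟩
        by_contra hcon
        push_neg at hcon
        have hL''N : L'' ≤ N := by omega
        have h0 := hq3 (N - L'') (by omega)
        unfold ap at h0
        rw [Finset.sum_range_succ] at h0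
        have hlow : ∑ i ∈ Finset.range L'', q i * s (N - L'' + i) = 0 := by
          refine Finset.sum_eq_zero fun i hi => ?_
          rw [hzero _ (by have := Finset.mem_range.mp hi; omega), mul_zero]
        rw [hlow, zero_add, hq1, one_mul, show N - L'' + L'' = N by omega, hsN] at h0
        exact one_ne_zero h0
      have heq : nthLinComplexity (N + 1) s = N + 1 :=
        le_antisymm (nth_le s (N + 1)) (hge _ (fit_nth s (N + 1)))
      refine ⟨Or.inr ⟨N, 0, a, le_refl _, by omega, ha1, by simpa [hL0] using ha2, ha3,
        hD1, by omega⟩, fun h => absurd h hD, fun _ => ?_⟩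
      rw [if_pos (by omega)]
      omega
    · -- L ≥ 1 : the invariant's auxiliary recurrence exists
      have hL1 : 1 ≤ L := by omega
      rcases hInv with h0 | ⟨m, Lb, b, hm1, hm2, hb1, hb2, hb3, hb4, hb5⟩
      · exact absurd h0 hL0
      have hrel : m = L + Lb - 1 := by omega
      have hLbL : Lb + 1 ≤ L := by omega
      have hmLb : m - Lb = L - 1 := by omega
      by_cases h2L : 2 * L ≤ N
      · -- jump to L' = N + 1 - L
        set L' := N + 1 - L with hL'def
        set k := N + 1 - 2 * L with hkdef
        have hkL : k + L = L' := by omega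
        set q : ℕ → ZMod 2 := fun i => shiftPad k a i + b i with hqdef
        have hq1 : q L' = 1 := by
          have e1 : shiftPad k a L' = 1 := by
            unfold shiftPad; rw [if_pos (by omega), show L' - k = L by omega, ha1]
          have e2 : b L' = 0 := hb2 _ (by omega)
          rw [hqdef]; simp only; rw [e1, e2, add_zero]
        have hq2 : ∀ i, L' < i → q i = 0 := by
          intro i hi
          have e1 : shiftPad k a i = 0 := shiftPad_supp k ha2 i (by omega)
          have e2 : b i = 0 := hb2 _ (by omega)
          rw [hqdef]; simp only; rw [e1, e2, add_zero]
        have hq3 : ∀ n, n + L' < N + 1 → ap s q L' n = 0 := by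
          intro n hn
          rw [hqdef, ap_add]
          have eb : ap s b L' n = ap s b Lb n := ap_ext n hb2 (by omega)
          have ea : ap s (shiftPad k a) L' n = ap s a L (n + k) := by
            rw [← hkL]; exact ap_shiftPad s a k L n
          rw [ea, eb]
          rcases Nat.lt_or_ge (n + L') N with h | h
          · rw [ha3 (n + k) (by omega), hb3 n (by omega), add_zero]
          · have hnval : n = N - L' := by omega
            have e1 : n + k = N - L := by omega
            have e2 : n = m - Lb := by omega
            rw [e1, hD1, e2, hb4]
            decide
        have hub : nthLinComplexity (N + 1) s ≤ L' := nth_le_of_fit ⟨q, hq1, hq2, hq3⟩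
        have hlb : L' ≤ nthLinComplexity (N + 1) s := by
          by_contra hcon
          push_neg at hcon
          obtain ⟨q', hq'1, hq'2, hq'3⟩ := fit_nth s (N + 1)
          exact hD (keyK (by omega) ha3 hq'3 hq'1)
        have heq : nthLinComplexity (N + 1) s = L' := le_antisymm hub hlb
        refine ⟨Or.inr ⟨N, L, a, le_refl _, h2L, ha1, ha2, ha3, hD1, by omega⟩,
          fun h => absurd h hD, fun _ => ?_⟩
        rw [if_pos h2L, heq]
      · -- 2L > N : complexity stays (different order-L recurrence)
        set j := L - 1 - (N - L) with hjdef
        have hjL : j + 1 ≤ L := by omega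
        set q : ℕ → ZMod 2 := fun i => a i + shiftPad j b i with hqdef
        have hsb0 : shiftPad j b L = 0 := by
          unfold shiftPad
          rw [if_pos (by omega)]
          exact hb2 _ (by omega)
        have hq1 : q L = 1 := by
          rw [hqdef]; simp only; rw [ha1, hsb0, add_zero]
        have hq2 : ∀ i, L < i → q i = 0 := by
          intro i hi
          have e2 : shiftPad j b i = 0 := by
            unfold shiftPad
            split
            · exact hb2 _ (by omega)
            · rfl
          rw [hqdef]; simp only; rw [ha2 i hi, e2, add_zero]
        have hq3 : ∀ n, n + L < N + 1 → ap s q L n = 0 := by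
          intro n hn
          rw [hqdef, ap_add]
          have eb : ap s (shiftPad j b) L n = ap s b Lb (n + j) := by
            rw [ap_ext n (shiftPad_supp j hb2) (by omega)]
            exact ap_shiftPad s b j Lb n
          rw [eb]
          rcases Nat.lt_or_ge (n + L) N with h | h
          · rw [ha3 n h, hb3 (n + j) (by omega), add_zero]
          · have hnval : n = N - L := by omega
            rw [hnval, hD1, show N - L + j = m - Lb by omega, hb4]
            decide
        have heq : nthLinComplexity (N + 1) s = L :=
          le_antisymm (nth_le_of_fit ⟨q, hq1, hq2, hq3⟩) (nth_mono (Nat.le_succ N))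
        refine ⟨Or.inr ⟨m, Lb, b, by omega, hm2, hb1, hb2, hb3, hb4, by omega⟩,
          fun h => absurd h hD, fun _ => ?_⟩
        rw [if_neg h2L, heq]

lemma master (s : ℕ → ZMod 2) : ∀ N, Inv s N := by
  intro N
  induction N with
  | zero =>
    left
    have : Fit s 0 0 := ⟨fun i => if i = 0 then 1 else 0, by simp,
      fun i hi => if_neg (by omega), fun n hn => absurd hn (by omega)⟩
    exact Nat.le_zero.mp (nth_le_of_fit this)
  | succ n ih =>
    obtain ⟨a, h1, h2, h3⟩ := fit_nth s n
    exact (step s n ih h1 h2 h3).1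
lemma nth_zero_iff (s : ℕ → ZMod 2) (N : ℕ) :
    nthLinComplexity N s = 0 ↔ ∀ n, n < N → s n = 0 := by
  constructor
  · intro h
    obtain ⟨a, h1, h2, h3⟩ := fit_nth s N
    rw [h] at h1 h3
    intro n hn
    have h' := h3 n (by omega)
    unfold ap at h'
    rw [Finset.sum_range_one, h1, one_mul] at h'
    simpa using h'
  · intro h
    have : Fit s N 0 := by
      refine ⟨fun i => if i = 0 then 1 else 0, by simp, fun i hi => if_neg (by omega),
        fun n hn => ?_⟩
      unfold ap
      rw [Finset.sum_range_one]
      simpa using h n (by omega)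
    exact Nat.le_zero.mp (nth_le_of_fit this)

/-- Key dichotomy: extending by the two possible bits. -/
lemma two_choices (s t : ℕ → ZMod 2) (N : ℕ) (hagree : ∀ n, n < N → s n = t n)
    (hdiff : s N ≠ t N) :
    (nthLinComplexity (N + 1) s = nthLinComplexity N s ∧
      nthLinComplexity (N + 1) t =
        (if 2 * nthLinComplexity N s ≤ N then N + 1 - nthLinComplexity N s
         else nthLinComplexity N s)) ∨
    (nthLinComplexity (N + 1) t = nthLinComplexity N s ∧
      nthLinComplexity (N + 1) s =
        (if 2 * nthLinComplexity N s ≤ N then N + 1 - nthLinComplexity N s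
         else nthLinComplexity N s)) := by
  have hts : nthLinComplexity N t = nthLinComplexity N s :=
    (nth_congr fun m hm => (hagree m hm).symm)
  set L := nthLinComplexity N s with hLdef
  have hLN : L ≤ N := nth_le s N
  obtain ⟨a, h1, h2, h3⟩ := fit_nth s N
  have h3t : ∀ n, n + L < N → ap t a L n = 0 := fun n hn => by
    rw [← ap_congr hagree hn]; exact h3 n hn
  have h1t : a (nthLinComplexity N t) = 1 := by rw [hts]; exact h1
  have h2t : ∀ i, nthLinComplexity N t < i → a i = 0 := by rw [hts]; exact h2
  have h3t' : ∀ n, n + nthLinComplexity N t < N → ap t a (nthLinComplexity N t) n = 0 := by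
    rw [hts]; exact h3t
  have hdisc : ap s a L (N - L) ≠ ap t a L (N - L) := by
    intro hEq
    have hsum : ap s a L (N - L) + ap t a L (N - L) = s N + t N := by
      unfold ap
      rw [← Finset.sum_add_distrib, Finset.sum_range_succ]
      have hlow : ∑ i ∈ Finset.range L,
          (a i * s (N - L + i) + a i * t (N - L + i)) = 0 := by
        refine Finset.sum_eq_zero fun i hi => ?_
        have := Finset.mem_range.mp hi
        rw [hagree (N - L + i) (by omega)]
        exact CharTwo.add_self_eq_zero _
      rw [hlow, zero_add, h1, one_mul, one_mul, show N - L + L = N by omega]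
    rw [hEq] at hsum
    have : s N + t N = 0 := by rw [← hsum]; exact CharTwo.add_self_eq_zero _
    exact hdiff (by
      have h2 : s N = - t N := by linear_combination this
      rw [h2, CharTwo.neg_eq])
  have hstep_s := step s N (master s N) h1 h2 h3
  have hstep_t := step t N (master t N) h1t h2t h3t'
  rw [hts] at hstep_t
  by_cases hDs : ap s a L (N - L) = 0
  · have hDt : ap t a L (N - L) ≠ 0 := fun h => hdisc (by rw [hDs, h])
    exact Or.inl ⟨hstep_s.2.1 hDs, hstep_t.2.2 hDt⟩
  · have hDt : ap t a L (N - L) = 0 := by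
      by_contra h
      exact hdisc (by rw [zmod2_ne _ hDs, zmod2_ne _ h])
    exact Or.inr ⟨hstep_t.2.1 hDt, hstep_s.2.2 hDs⟩
lemma extSeq_snoc_agree (N : ℕ) (w : Fin N → ZMod 2) (b : ZMod 2) :
    ∀ n, n < N → extSeq N w n = extSeq (N + 1) (Fin.snoc w b) n := by
  intro n hn
  unfold extSeq
  rw [dif_pos hn, dif_pos (by omega : n < N + 1)]
  have h : (⟨n, by omega⟩ : Fin (N + 1)) = Fin.castSucc ⟨n, hn⟩ := rfl
  rw [h, Fin.snoc_castSucc]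

lemma extSeq_snoc_last (N : ℕ) (w : Fin N → ZMod 2) (b : ZMod 2) :
    extSeq (N + 1) (Fin.snoc w b) N = b := by
  unfold extSeq
  rw [dif_pos (by omega : N < N + 1)]
  have h : (⟨N, by omega⟩ : Fin (N + 1)) = Fin.last N := rfl
  rw [h, Fin.snoc_last]

lemma lc_snoc (N : ℕ) (w : Fin N → ZMod 2) (b : ZMod 2) :
    nthLinComplexity N (extSeq (N + 1) (Fin.snoc w b)) = nthLinComplexity N (extSeq N w) :=
  nth_congr fun m hm => (extSeq_snoc_agree N w b m hm).symm

/-- The per-word dichotomy for the two one-bit extensions. -/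
lemma snoc_dichotomy (N : ℕ) (w : Fin N → ZMod 2) :
    ∃ b0 : ZMod 2,
      nthLinComplexity (N + 1) (extSeq (N + 1) (Fin.snoc w b0)) = nthLinComplexity N (extSeq N w) ∧
      nthLinComplexity (N + 1) (extSeq (N + 1) (Fin.snoc w (b0 + 1))) =
        (if 2 * nthLinComplexity N (extSeq N w) ≤ N
          then N + 1 - nthLinComplexity N (extSeq N w)
          else nthLinComplexity N (extSeq N w)) := by
  have hagree : ∀ n, n < N →
      extSeq (N + 1) (Fin.snoc w 0) n = extSeq (N + 1) (Fin.snoc w 1) n := by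
    intro n hn
    rw [← extSeq_snoc_agree N w 0 n hn, extSeq_snoc_agree N w 1 n hn]
  have hdiff : extSeq (N + 1) (Fin.snoc w 0) N ≠ extSeq (N + 1) (Fin.snoc w 1) N := by
    rw [extSeq_snoc_last, extSeq_snoc_last]; decide
  have h0 : nthLinComplexity N (extSeq (N + 1) (Fin.snoc w 0)) = nthLinComplexity N (extSeq N w) :=
    lc_snoc N w 0
  have h1 : nthLinComplexity N (extSeq (N + 1) (Fin.snoc w 1)) = nthLinComplexity N (extSeq N w) :=
    lc_snoc N w 1
  have h2 := two_choices _ _ N hagree hdiff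
  rw [h0] at h2
  rcases h2 with ⟨hA, hB⟩ | ⟨hA, hB⟩
  · exact ⟨0, hA, by rw [show (0 : ZMod 2) + 1 = 1 from by decide]; exact hB⟩
  · exact ⟨1, hA, by rw [show (1 : ZMod 2) + 1 = 0 from by decide]; exact hB⟩

lemma A_card_filter (N L : ℕ) :
    A N L = ∑ v : Fin N → ZMod 2,
      (if nthLinComplexity N (extSeq N v) = L then 1 else 0) := by
  unfold A
  rw [Finset.card_filter]

lemma sum_zmod2 (F : ZMod 2 → ℕ) : ∑ b : ZMod 2, F b = F 0 + F 1 := by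
  rw [show (Finset.univ : Finset (ZMod 2)) = {0, 1} from by decide,
    Finset.sum_insert (by decide), Finset.sum_singleton]

lemma sum_zmod2' (F : ZMod 2 → ℕ) (b0 : ZMod 2) : ∑ b : ZMod 2, F b = F b0 + F (b0 + 1) := by
  rw [sum_zmod2]
  rcases (show b0 = 0 ∨ b0 = 1 by revert b0; decide) with h | h <;> subst h
  · rfl
  · rw [show (1 : ZMod 2) + 1 = 0 by decide, add_comm]

lemma A_succ (N L : ℕ) :
    A (N + 1) L = (if 2 * L ≤ N then A N L else 2 * A N L)
      + (if N + 2 ≤ 2 * L ∧ L ≤ N + 1 then A N (N + 1 - L) else 0) := by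
  have hmain : A (N + 1) L = ∑ w : Fin N → ZMod 2,
      ((if nthLinComplexity N (extSeq N w) = L then (if 2 * L ≤ N then 1 else 2) else 0)
        + (if 2 * nthLinComplexity N (extSeq N w) ≤ N ∧
              N + 1 - nthLinComplexity N (extSeq N w) = L ∧
              ¬ nthLinComplexity N (extSeq N w) = L then 1 else 0)) := by
    rw [A_card_filter]
    rw [← Equiv.sum_comp (Fin.snocEquiv (fun _ : Fin (N + 1) => ZMod 2))
      (fun v => if nthLinComplexity (N + 1) (extSeq (N + 1) v) = L then 1 else 0)]
    rw [Fintype.sum_prod_type]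
    rw [Finset.sum_comm]
    refine Finset.sum_congr rfl fun w _ => ?_
    have hsnoc : ∀ b : ZMod 2,
        (Fin.snocEquiv (fun _ : Fin (N + 1) => ZMod 2)) (b, w) = Fin.snoc w b := by
      intro b; funext i; rfl
    set K := nthLinComplexity N (extSeq N w) with hK
    obtain ⟨b0, hb0, hb1⟩ := snoc_dichotomy N w
    have hKN : K ≤ N := nth_le _ N
    rw [sum_zmod2' (fun b =>
      if nthLinComplexity (N + 1)
          (extSeq (N + 1) ((Fin.snocEquiv (fun _ : Fin (N + 1) => ZMod 2)) (b, w))) = L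
      then 1 else 0) b0]
    simp only [hsnoc]
    rw [← hK] at hb0 hb1
    rw [hb0, hb1]
    by_cases h2K : 2 * K ≤ N
    · rw [if_pos h2K]
      by_cases hKL : K = L
      · have hj : ¬ (N + 1 - L = L) := by omega
        simp [hKL, hj, show 2 * L ≤ N by omega]
      · by_cases hjump : N + 1 - K = L
        · simp [hKL, hjump, h2K]
        · simp [hKL, hjump]
    · rw [if_neg h2K]
      by_cases hKL : K = L
      · simp [hKL, h2K, show ¬ 2 * L ≤ N by omega]
      · simp [hKL, h2K]
  rw [hmain, Finset.sum_add_distrib]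
  congr 1
  · have h1 : ∀ w : Fin N → ZMod 2,
        (if nthLinComplexity N (extSeq N w) = L then (if 2 * L ≤ N then 1 else 2) else 0)
        = (if 2 * L ≤ N then 1 else 2) * (if nthLinComplexity N (extSeq N w) = L then 1 else 0) := by
      intro w
      by_cases h : nthLinComplexity N (extSeq N w) = L <;> simp [h]
    rw [Finset.sum_congr rfl fun w _ => h1 w, ← Finset.mul_sum, ← A_card_filter]
    by_cases h : 2 * L ≤ N
    · rw [if_pos h, if_pos h, one_mul]
    · rw [if_neg h, if_neg h]
  · by_cases hC : N + 2 ≤ 2 * L ∧ L ≤ N + 1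
    · rw [if_pos hC, A_card_filter]
      refine Finset.sum_congr rfl fun w _ => ?_
      exact if_congr (by constructor <;> intro h <;> omega) rfl rfl
    · rw [if_neg hC, Finset.sum_eq_zero fun w _ => if_neg (by omega)]
lemma lc_zero_iff (N : ℕ) (v : Fin N → ZMod 2) :
    nthLinComplexity N (extSeq N v) = 0 ↔ v = fun _ => 0 := by
  rw [nth_zero_iff]
  constructor
  · intro h
    funext i
    have := h i.val i.isLt
    unfold extSeq at this
    rwa [dif_pos i.isLt] at this
  · intro h n hn
    unfold extSeq
    rw [dif_pos hn, h]

lemma A_zero (N : ℕ) : A N 0 = 1 := by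
  unfold A
  rw [Finset.card_eq_one]
  refine ⟨fun _ => 0, ?_⟩
  ext v
  simp only [Finset.mem_filter, Finset.mem_univ, true_and, Finset.mem_singleton]
  exact lc_zero_iff N v

lemma A_gt (N L : ℕ) (h : N < L) : A N L = 0 := by
  unfold A
  rw [Finset.card_eq_zero, Finset.filter_eq_empty_iff]
  intro v _
  have := nth_le (extSeq N v) N
  omega

lemma A_formula : ∀ N L, 1 ≤ L → L ≤ N → A N L = 2 ^ min (2 * L - 1) (2 * N - 2 * L) := by
  intro N
  induction N with
  | zero => intro L h1 h2; omega
  | succ n ih =>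
    intro L h1 h2
    rw [A_succ n L]
    rcases Nat.lt_or_ge (2 * L) (n + 1) with hc | hc
    · -- 2L ≤ n : stays, no jump-in
      rw [if_pos (by omega), if_neg (by omega), add_zero, ih L h1 (by omega)]
      congr 1
      omega
    · rcases Nat.lt_or_ge (n + 1) (2 * L) with hc2 | hc2
      · -- 2L ≥ n+2
        rw [if_neg (by omega), if_pos (by omega)]
        rcases Nat.lt_or_ge n L with hL | hL
        · -- L = n + 1
          have hLn : L = n + 1 := by omega
          rw [hLn, A_gt n (n + 1) (by omega), show n + 1 - (n + 1) = 0 by omega, A_zero,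
            mul_zero, zero_add, show min (2 * (n + 1) - 1) (2 * (n + 1) - 2 * (n + 1)) = 0
              by omega, pow_zero]
        · -- 1 ≤ L ≤ n, n+2 ≤ 2L
          rw [ih L h1 hL, ih (n + 1 - L) (by omega) (by omega)]
          rw [show min (2 * L - 1) (2 * n - 2 * L) = 2 * n - 2 * L by omega,
            show min (2 * (n + 1 - L) - 1) (2 * n - 2 * (n + 1 - L)) = 2 * n + 1 - 2 * L
              by omega,
            show min (2 * L - 1) (2 * (n + 1) - 2 * L) = 2 * n + 2 - 2 * L by omega]
          rw [show 2 * n + 1 - 2 * L = (2 * n - 2 * L) + 1 by omega,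
            show 2 * n + 2 - 2 * L = (2 * n - 2 * L) + 2 by omega]
          ring
      · -- 2L = n + 1
        have hLn : L ≤ n := by omega
        rw [if_neg (by omega), if_neg (by omega), add_zero, ih L h1 hLn]
        rw [show min (2 * L - 1) (2 * n - 2 * L) = n - 1 by omega,
          show min (2 * L - 1) (2 * (n + 1) - 2 * L) = n by omega]
        have hpow : (2 : ℕ) ^ n = 2 ^ (n - 1) * 2 := by
          rw [← pow_succ]
          congr 1
          omega
        rw [hpow]
        ring

lemma A_sum (N : ℕ) : ∑ L ∈ Finset.range (N + 1), A N L = 2 ^ N := by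
  have h1 : ∀ L, A N L = ∑ v : Fin N → ZMod 2,
      (if nthLinComplexity N (extSeq N v) = L then 1 else 0) := fun L => A_card_filter N L
  calc ∑ L ∈ Finset.range (N + 1), A N L
      = ∑ L ∈ Finset.range (N + 1), ∑ v : Fin N → ZMod 2,
          (if nthLinComplexity N (extSeq N v) = L then 1 else 0) := by
        exact Finset.sum_congr rfl fun L _ => h1 L
    _ = ∑ v : Fin N → ZMod 2, ∑ L ∈ Finset.range (N + 1),
          (if nthLinComplexity N (extSeq N v) = L then 1 else 0) := Finset.sum_comm
    _ = ∑ v : Fin N → ZMod 2, 1 := by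
        refine Finset.sum_congr rfl fun v _ => ?_
        rw [Finset.sum_ite_eq (Finset.range (N + 1)) (nthLinComplexity N (extSeq N v))
          (fun _ => 1)]
        rw [if_pos (Finset.mem_range.mpr (by have := nth_le (extSeq N v) N; omega))]
    _ = 2 ^ N := by
        rw [Finset.sum_const, smul_eq_mul, mul_one, Finset.card_univ]
        rw [Fintype.card_fun]
        simp
end LCaux

theorem stmt13 (N : ℕ) (hN : 1 ≤ N) :
    (∀ L, 1 ≤ L → L ≤ N → A N L = 2 ^ min (2 * L - 1) (2 * N - 2 * L)) ∧
    A N 0 = 1 ∧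
    ∑ L ∈ Finset.range (N + 1), A N L = 2 ^ N :=
  ⟨fun L h1 h2 => LCaux.A_formula N L h1 h2, LCaux.A_zero N, LCaux.A_sum N⟩
end

section
/- For every function r with r(N) → ∞, the expected symmetric exponential linear complexity E_N^{lin-exp-sym} := 2^{-N} ∑_{S_N} 2^{L^sym(S_N)} satisfies E_N^{lin-exp-sym} ≥ (1 − c·4^{−r(N)}) · 2^{N/2 − r(N)} for some absolute constant c > 0, and the expected symmetric linear complexity satisfies E_N^{lin-sym} ≥ (1 − c·4^{−log N})(N/2 − log N), hence E_N^{lin-sym} ≥ N/2 − log N + o(1). -/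
/-- The `N`th symmetric linear complexity of a length-`N` binary word. -/
noncomputable def symLinComplexity (N : ℕ) (v : Fin N → ZMod 2) : ℕ :=
  min (nthLinComplexity N (extSeq N v))
      (nthLinComplexity N (fun n => extSeq N v (N - 1 - n)))

open Finset

lemma recur_N (N : ℕ) (s : ℕ → ZMod 2) :
    N ∈ {L | ∃ c : ℕ → ZMod 2,
      ∀ n : ℕ, n + L < N → s (n + L) = ∑ ℓ ∈ Finset.range L, c ℓ * s (n + ℓ)} :=
  ⟨fun _ => 0, fun n hn => absurd hn (by omega)⟩

lemma nthLC_mem (N : ℕ) (s : ℕ → ZMod 2) :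
    nthLinComplexity N s ∈ {L | ∃ c : ℕ → ZMod 2,
      ∀ n : ℕ, n + L < N → s (n + L) = ∑ ℓ ∈ Finset.range L, c ℓ * s (n + ℓ)} :=
  Nat.sInf_mem ⟨N, recur_N N s⟩

lemma rec_mono {N : ℕ} {s s' : ℕ → ZMod 2} (h : ∀ k, k < N → s k = s' k) {L : ℕ}
    (hc : ∃ c : ℕ → ZMod 2, ∀ n, n + L < N → s (n+L) = ∑ ℓ ∈ range L, c ℓ * s (n+ℓ)) :
    ∃ c : ℕ → ZMod 2, ∀ n, n + L < N → s' (n+L) = ∑ ℓ ∈ range L, c ℓ * s' (n+ℓ) := by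
  obtain ⟨c, hc⟩ := hc
  refine ⟨c, fun n hn => ?_⟩
  rw [← h _ hn, hc n hn]
  exact Finset.sum_congr rfl fun ℓ hℓ => by
    rw [h (n+ℓ) (by have := Finset.mem_range.1 hℓ; omega)]

lemma nthLC_congr {N : ℕ} {s s' : ℕ → ZMod 2} (h : ∀ k, k < N → s k = s' k) :
    nthLinComplexity N s = nthLinComplexity N s' := by
  unfold nthLinComplexity
  congr 1
  ext L
  exact ⟨fun hc => rec_mono h hc, fun hc => rec_mono (fun k hk => (h k hk).symm) hc⟩

open Classical in
noncomputable def coeffs (N L : ℕ) (s : ℕ → ZMod 2) : ℕ → ZMod 2 :=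
  if h : ∃ c : ℕ → ZMod 2, ∀ n, n + L < N → s (n+L) = ∑ ℓ ∈ range L, c ℓ * s (n+ℓ)
  then h.choose else 0

lemma coeffs_spec {N L : ℕ} {s : ℕ → ZMod 2}
    (h : ∃ c : ℕ → ZMod 2, ∀ n, n + L < N → s (n+L) = ∑ ℓ ∈ range L, c ℓ * s (n+ℓ)) :
    ∀ n, n + L < N → s (n+L) = ∑ ℓ ∈ range L, coeffs N L s ℓ * s (n+ℓ) := by
  classical
  rw [coeffs]
  rw [dif_pos h]
  exact h.choose_spec

open Classical in
lemma card_level (N L : ℕ) :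
    ((univ : Finset (Fin N → ZMod 2)).filter
      (fun v => nthLinComplexity N (extSeq N v) = L)).card ≤ 4 ^ L := by
  classical
  have key : ((univ : Finset (Fin N → ZMod 2)).filter
      (fun v => nthLinComplexity N (extSeq N v) = L)).card
      ≤ Fintype.card ((Fin L → ZMod 2) × (Fin L → ZMod 2)) := by
    rw [← Finset.card_univ]
    apply Finset.card_le_card_of_injOn
      (fun v => (fun i : Fin L => coeffs N L (extSeq N v) i,
                 fun i : Fin L => extSeq N v i))
      (fun _ _ => Finset.mem_univ _)
    intro v hv w hw hvw
    simp only [Finset.mem_coe, mem_filter, mem_univ, true_and] at hv hw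
    have hcv := coeffs_spec (hv ▸ nthLC_mem N (extSeq N v))
    have hcw := coeffs_spec (hw ▸ nthLC_mem N (extSeq N w))
    have hfst := congrArg Prod.fst hvw
    have hsnd := congrArg Prod.snd hvw
    simp only at hfst hsnd
    have keyn : ∀ n, n < N → extSeq N v n = extSeq N w n := by
      intro n
      induction n using Nat.strong_induction_on with
      | _ n ih =>
        intro hn
        by_cases hL : n < L
        · exact congrFun hsnd ⟨n, hL⟩
        · have hn' : (n - L) + L = n := by omega
          have h1 := hcv (n - L) (by omega)
          have h2 := hcw (n - L) (by omega)
          rw [hn'] at h1 h2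
          rw [h1, h2]
          refine Finset.sum_congr rfl fun ℓ hℓ => ?_
          have hℓL := Finset.mem_range.1 hℓ
          rw [ih (n - L + ℓ) (by omega) (by omega)]
          have := congrFun hfst ⟨ℓ, hℓL⟩
          simp only at this
          rw [this]
    funext i
    have := keyn i i.2
    simpa [extSeq, i.2] using this
  calc _ ≤ _ := key
  _ = 4 ^ L := by simp [Fintype.card_fun, ← mul_pow]

open Classical in
lemma card_le_count (N W : ℕ) :
    ((univ : Finset (Fin N → ZMod 2)).filter
      (fun v => nthLinComplexity N (extSeq N v) ≤ W)).card ≤ 4 ^ (W+1) := by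
  classical
  have hsub : ((univ : Finset (Fin N → ZMod 2)).filter
      (fun v => nthLinComplexity N (extSeq N v) ≤ W)) ⊆
      (Finset.range (W+1)).biUnion (fun L => (univ : Finset (Fin N → ZMod 2)).filter
        (fun v => nthLinComplexity N (extSeq N v) = L)) := by
    intro v hv
    simp only [mem_filter, mem_univ, true_and] at hv
    simp only [Finset.mem_biUnion, Finset.mem_range, mem_filter, mem_univ, true_and]
    exact ⟨_, by omega, rfl⟩
  calc _ ≤ _ := Finset.card_le_card hsub
  _ ≤ ∑ L ∈ Finset.range (W+1), ((univ : Finset (Fin N → ZMod 2)).filter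
        (fun v => nthLinComplexity N (extSeq N v) = L)).card := Finset.card_biUnion_le
  _ ≤ ∑ L ∈ Finset.range (W+1), 4 ^ L := Finset.sum_le_sum fun L _ => card_level N L
  _ ≤ 4 ^ (W+1) := by
      induction (W+1) with
      | zero => simp
      | succ n ih =>
        rw [Finset.sum_range_succ]
        calc _ ≤ 4^n + 4^n := by omega
        _ ≤ 4^(n+1) := by rw [pow_succ]; omega

def revv (N : ℕ) (v : Fin N → ZMod 2) : Fin N → ZMod 2 :=
  fun i => v ⟨N - 1 - (i : ℕ), by have := i.isLt; omega⟩

lemma revv_invol (N : ℕ) : Function.Involutive (revv N) := by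
  intro v
  funext i
  simp only [revv]
  congr 1
  have := i.isLt
  exact Fin.ext (by simp; omega)

lemma rev_eq (N : ℕ) (v : Fin N → ZMod 2) :
    nthLinComplexity N (fun n => extSeq N v (N - 1 - n)) =
      nthLinComplexity N (extSeq N (revv N v)) := by
  apply nthLC_congr
  intro k hk
  have h1 : N - 1 - k < N := by omega
  simp only [extSeq, dif_pos h1, dif_pos hk]
  rfl

open Classical in
lemma card_rev (N W : ℕ) :
    ((univ : Finset (Fin N → ZMod 2)).filter
      (fun v => nthLinComplexity N (fun n => extSeq N v (N - 1 - n)) ≤ W)).card ≤ 4 ^ (W+1) := by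
  classical
  have h := revv_invol N
  have himg : ((univ : Finset (Fin N → ZMod 2)).filter
      (fun v => nthLinComplexity N (fun n => extSeq N v (N - 1 - n)) ≤ W)).image (revv N) =
      ((univ : Finset (Fin N → ZMod 2)).filter
      (fun v => nthLinComplexity N (extSeq N v) ≤ W)) := by
    ext w
    simp only [Finset.mem_image, mem_filter, mem_univ, true_and]
    constructor
    · rintro ⟨u, hu, rfl⟩
      rwa [rev_eq] at hu
    · intro hw
      refine ⟨revv N w, ?_, h w⟩
      rwa [rev_eq, h w]
  calc ((univ : Finset (Fin N → ZMod 2)).filter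
      (fun v => nthLinComplexity N (fun n => extSeq N v (N - 1 - n)) ≤ W)).card
      = _ := (Finset.card_image_of_injective _ h.injective).symm
  _ ≤ 4 ^ (W+1) := himg ▸ card_le_count N W

open Classical in
lemma card_sym_le (N W : ℕ) :
    ((univ : Finset (Fin N → ZMod 2)).filter
      (fun v => symLinComplexity N v ≤ W)).card ≤ 2 * 4 ^ (W+1) := by
  classical
  have hsub : ((univ : Finset (Fin N → ZMod 2)).filter
      (fun v => symLinComplexity N v ≤ W)) ⊆
      ((univ : Finset (Fin N → ZMod 2)).filter
        (fun v => nthLinComplexity N (extSeq N v) ≤ W)) ∪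
      ((univ : Finset (Fin N → ZMod 2)).filter
        (fun v => nthLinComplexity N (fun n => extSeq N v (N - 1 - n)) ≤ W)) := by
    intro v hv
    simp only [mem_filter, mem_univ, true_and, Finset.mem_union] at hv ⊢
    rcases min_le_iff.1 hv with h | h
    · exact Or.inl h
    · exact Or.inr h
  calc _ ≤ _ := Finset.card_le_card hsub
  _ ≤ _ + _ := Finset.card_union_le _ _
  _ ≤ 4^(W+1) + 4^(W+1) := Nat.add_le_add (card_le_count N W) (card_rev N W)
  _ = 2 * 4^(W+1) := by ring

lemma sum_exp_ge (N K : ℕ) :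
    ((2:ℝ)^N - 2*4^K) * 2^K ≤ ∑ v : Fin N → ZMod 2, (2:ℝ)^(symLinComplexity N v) := by
  classical
  set B := (univ : Finset (Fin N → ZMod 2)).filter (fun v => K ≤ symLinComplexity N v) with hB
  have h2 : (B.card : ℝ) * 2^K ≤ ∑ v ∈ B, (2:ℝ)^(symLinComplexity N v) := by
    calc (B.card : ℝ) * 2^K = ∑ _v ∈ B, (2:ℝ)^K := by rw [Finset.sum_const, nsmul_eq_mul]
    _ ≤ _ := Finset.sum_le_sum fun v hv =>
        pow_le_pow_right₀ one_le_two (mem_filter.1 hv).2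
  have h3 : ∑ v ∈ B, (2:ℝ)^(symLinComplexity N v)
      ≤ ∑ v : Fin N → ZMod 2, (2:ℝ)^(symLinComplexity N v) :=
    Finset.sum_le_sum_of_subset_of_nonneg (Finset.subset_univ B)
      (fun v _ _ => by positivity)
  have hcard : (2:ℝ)^N - 2*4^K ≤ (B.card : ℝ) := by
    rcases Nat.eq_zero_or_pos K with hK | hK
    · subst hK
      have hBu : B = univ := by
        ext v; simp [hB]
      rw [hBu, Finset.card_univ]
      have : (Fintype.card (Fin N → ZMod 2) : ℝ) = 2^N := by
        simp [Fintype.card_fun]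
      rw [this]
      have : (0:ℝ) ≤ 2*4^0 := by norm_num
      linarith
    · have hcompl : ((univ : Finset (Fin N → ZMod 2)).filter
          (fun v => symLinComplexity N v ≤ K - 1)).card + B.card
          = Fintype.card (Fin N → ZMod 2) := by
        have hBeq : B = (univ : Finset (Fin N → ZMod 2)).filter
            (fun v => ¬ symLinComplexity N v ≤ K - 1) := by
          ext v
          simp only [hB, mem_filter, mem_univ, true_and]
          omega
        rw [hBeq, ← Finset.card_univ]
        exact Finset.card_filter_add_card_filter_not
            (p := fun v => symLinComplexity N v ≤ K - 1)
      have hA := card_sym_le N (K - 1)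
      have hK1 : (K - 1) + 1 = K := by omega
      rw [hK1] at hA
      have hcf : (Fintype.card (Fin N → ZMod 2) : ℝ) = 2^N := by
        simp [Fintype.card_fun]
      rw [Fintype.card_fun, Fintype.card_fin, ZMod.card] at hcompl
      have hle : 2^N ≤ B.card + 2*4^K := by omega
      have := (Nat.cast_le (α := ℝ)).2 hle
      push_cast at this
      linarith
  have h2K : (0:ℝ) < 2^K := by positivity
  calc ((2:ℝ)^N - 2*4^K) * 2^K ≤ (B.card : ℝ) * 2^K :=
        mul_le_mul_of_nonneg_right hcard h2K.le
  _ ≤ _ := h2.trans h3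

lemma sum_lin_ge (N K : ℕ) :
    ((2:ℝ)^N - 2*4^K) * K ≤ ∑ v : Fin N → ZMod 2, (symLinComplexity N v : ℝ) := by
  classical
  rcases Nat.eq_zero_or_pos K with hK | hK
  · subst hK
    simp only [Nat.cast_zero, mul_zero]
    exact Finset.sum_nonneg fun v _ => by positivity
  set B := (univ : Finset (Fin N → ZMod 2)).filter (fun v => K ≤ symLinComplexity N v) with hB
  have h2 : (B.card : ℝ) * K ≤ ∑ v ∈ B, (symLinComplexity N v : ℝ) := by
    calc (B.card : ℝ) * K = ∑ _v ∈ B, (K:ℝ) := by rw [Finset.sum_const, nsmul_eq_mul]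
    _ ≤ _ := Finset.sum_le_sum fun v hv => Nat.cast_le.2 (mem_filter.1 hv).2
  have h3 : ∑ v ∈ B, (symLinComplexity N v : ℝ)
      ≤ ∑ v : Fin N → ZMod 2, (symLinComplexity N v : ℝ) :=
    Finset.sum_le_sum_of_subset_of_nonneg (Finset.subset_univ B)
      (fun v _ _ => by positivity)
  have hcard : (2:ℝ)^N - 2*4^K ≤ (B.card : ℝ) := by
    have hcompl : ((univ : Finset (Fin N → ZMod 2)).filter
        (fun v => symLinComplexity N v ≤ K - 1)).card + B.card
        = Fintype.card (Fin N → ZMod 2) := by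
      have hBeq : B = (univ : Finset (Fin N → ZMod 2)).filter
          (fun v => ¬ symLinComplexity N v ≤ K - 1) := by
        ext v
        simp only [hB, mem_filter, mem_univ, true_and]
        omega
      rw [hBeq, ← Finset.card_univ]
      exact Finset.card_filter_add_card_filter_not
          (p := fun v => symLinComplexity N v ≤ K - 1)
    have hA := card_sym_le N (K - 1)
    have hK1 : (K - 1) + 1 = K := by omega
    rw [hK1] at hA
    rw [Fintype.card_fun, Fintype.card_fin, ZMod.card] at hcompl
    have hle : 2^N ≤ B.card + 2*4^K := by omega
    have := (Nat.cast_le (α := ℝ)).2 hle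
    push_cast at this
    linarith
  have hKpos : (0:ℝ) ≤ (K:ℝ) := by positivity
  calc ((2:ℝ)^N - 2*4^K) * K ≤ (B.card : ℝ) * K :=
        mul_le_mul_of_nonneg_right hcard hKpos
  _ ≤ _ := h2.trans h3

lemma E2_ge_one (N : ℕ) :
    (1:ℝ) ≤ (2:ℝ)^(-(N:ℤ)) * ∑ v : Fin N → ZMod 2, (2:ℝ)^(symLinComplexity N v) := by
  have hsum : (2:ℝ)^N ≤ ∑ v : Fin N → ZMod 2, (2:ℝ)^(symLinComplexity N v) := by
    have : ((Finset.univ : Finset (Fin N → ZMod 2)).card : ℝ) * 1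
        ≤ ∑ v : Fin N → ZMod 2, (2:ℝ)^(symLinComplexity N v) := by
      calc _ = ∑ _v : Fin N → ZMod 2, (1:ℝ) := by rw [Finset.sum_const, nsmul_eq_mul]
      _ ≤ _ := Finset.sum_le_sum fun v _ => one_le_pow₀ one_le_two
    rw [Finset.card_univ, Fintype.card_fun, Fintype.card_fin, ZMod.card] at this
    push_cast at this
    linarith
  have ht : (0:ℝ) < (2:ℝ)^(-(N:ℤ)) := by positivity
  have h2N : (2:ℝ)^(-(N:ℤ)) * (2:ℝ)^N = 1 := by
    rw [← zpow_natCast (2:ℝ) N, ← zpow_add₀ (by norm_num : (2:ℝ) ≠ 0)]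
    simp
  calc (1:ℝ) = (2:ℝ)^(-(N:ℤ)) * (2:ℝ)^N := h2N.symm
  _ ≤ _ := mul_le_mul_of_nonneg_left hsum ht.le

lemma pow4_eq (N : ℕ) : (4:ℝ)^((N:ℝ)/2) = (2:ℝ)^N := by
  have h4 : (4:ℝ) = (2:ℝ)^(2:ℝ) := by
    rw [show (2:ℝ) = ((2:ℕ):ℝ) from by norm_num, Real.rpow_natCast]
    norm_num
  rw [h4, ← Real.rpow_natCast (2:ℝ) N, ← Real.rpow_mul (by norm_num : (0:ℝ) ≤ 2),
    show (2:ℝ)*((N:ℝ)/2) = (N:ℝ) from by ring]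

lemma main1 (N : ℕ) (x : ℝ) :
    (1 - 8*(4:ℝ)^(-x)) * (2:ℝ)^((N:ℝ)/2 - x) ≤
      (2:ℝ)^(-(N:ℤ)) * ∑ v : Fin N → ZMod 2, (2:ℝ)^(symLinComplexity N v) := by
  set E := (2:ℝ)^(-(N:ℤ)) * ∑ v : Fin N → ZMod 2, (2:ℝ)^(symLinComplexity N v) with hE
  set y := (N:ℝ)/2 - x with hy
  have hE1 : (1:ℝ) ≤ E := E2_ge_one N
  have h2y : (0:ℝ) ≤ (2:ℝ)^y := Real.rpow_nonneg (by norm_num) y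
  have h4x : (0:ℝ) < (4:ℝ)^(-x) := Real.rpow_pos_of_pos (by norm_num) _
  by_cases hb : 1 - 8*(4:ℝ)^(-x) ≤ 0
  · nlinarith
  push_neg at hb
  by_cases hyneg : y < 0
  · have h2y1 : (2:ℝ)^y ≤ 1 :=
      Real.rpow_le_one_of_one_le_of_nonpos (by norm_num) hyneg.le
    nlinarith
  push_neg at hyneg
  set K := Nat.ceil y with hK
  have hKy : y ≤ (K:ℝ) := Nat.le_ceil y
  have hKy1 : (K:ℝ) ≤ y + 1 := (Nat.ceil_lt_add_one hyneg).le
  have ht : (0:ℝ) < (2:ℝ)^(-(N:ℤ)) := by positivity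
  have h1 : (2:ℝ)^(-(N:ℤ)) * (2:ℝ)^N = 1 := by
    rw [← zpow_natCast (2:ℝ) N, ← zpow_add₀ (by norm_num : (2:ℝ) ≠ 0)]
    simp
  -- (A)
  have hA : (2:ℝ)^y ≤ (2:ℝ)^K := by
    rw [← Real.rpow_natCast (2:ℝ) K]
    exact Real.rpow_le_rpow_of_exponent_le one_le_two hKy
  -- (B)
  have hB : 2*(4:ℝ)^K * (2:ℝ)^(-(N:ℤ)) ≤ 8*(4:ℝ)^(-x) := by
    have h4K : (4:ℝ)^K ≤ (4:ℝ)^(y+1) := by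
      rw [← Real.rpow_natCast (4:ℝ) K]
      exact Real.rpow_le_rpow_of_exponent_le (by norm_num) hKy1
    have h4y1 : (4:ℝ)^(y+1) = 4 * (4:ℝ)^(-x) * (2:ℝ)^N := by
      rw [hy, show (N:ℝ)/2 - x + 1 = (N:ℝ)/2 + (-x) + 1 from by ring,
        Real.rpow_add (by norm_num), Real.rpow_add (by norm_num), pow4_eq,
        Real.rpow_one]
      ring
    calc 2*(4:ℝ)^K * (2:ℝ)^(-(N:ℤ)) ≤ 2*(4 * (4:ℝ)^(-x) * (2:ℝ)^N) * (2:ℝ)^(-(N:ℤ)) := by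
          nlinarith [h4K.trans_eq h4y1]
    _ = 8*(4:ℝ)^(-x) * ((2:ℝ)^(-(N:ℤ)) * (2:ℝ)^N) := by ring
    _ = 8*(4:ℝ)^(-x) := by rw [h1]; ring
  have hbb : 1 - 8*(4:ℝ)^(-x) ≤ 1 - 2*(4:ℝ)^K * (2:ℝ)^(-(N:ℤ)) := by linarith
  have hmul : (1 - 8*(4:ℝ)^(-x)) * (2:ℝ)^y
      ≤ (1 - 2*(4:ℝ)^K * (2:ℝ)^(-(N:ℤ))) * (2:ℝ)^K :=
    mul_le_mul hbb hA h2y (by linarith)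
  have hmaster := sum_exp_ge N K
  calc (1 - 8*(4:ℝ)^(-x)) * (2:ℝ)^y ≤ (1 - 2*(4:ℝ)^K * (2:ℝ)^(-(N:ℤ))) * (2:ℝ)^K := hmul
  _ = (2:ℝ)^(-(N:ℤ)) * (((2:ℝ)^N - 2*4^K) * 2^K) := by linear_combination (-(2:ℝ)^K) * h1
  _ ≤ E := by
      rw [hE]
      exact mul_le_mul_of_nonneg_left hmaster ht.le

lemma main2 (N : ℕ) (x : ℝ) (hyy : 0 ≤ (N:ℝ)/2 - x) :
    (1 - 8*(4:ℝ)^(-x)) * ((N:ℝ)/2 - x) ≤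
      (2:ℝ)^(-(N:ℤ)) * ∑ v : Fin N → ZMod 2, (symLinComplexity N v : ℝ) := by
  set E := (2:ℝ)^(-(N:ℤ)) * ∑ v : Fin N → ZMod 2, (symLinComplexity N v : ℝ) with hE
  set y := (N:ℝ)/2 - x with hy
  have hE0 : (0:ℝ) ≤ E := by
    rw [hE]
    have : (0:ℝ) ≤ ∑ v : Fin N → ZMod 2, (symLinComplexity N v : ℝ) :=
      Finset.sum_nonneg fun v _ => by positivity
    positivity
  have h4x : (0:ℝ) < (4:ℝ)^(-x) := Real.rpow_pos_of_pos (by norm_num) _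
  by_cases hb : 1 - 8*(4:ℝ)^(-x) ≤ 0
  · nlinarith
  push_neg at hb
  set K := Nat.ceil y with hK
  have hKy : y ≤ (K:ℝ) := Nat.le_ceil y
  have hKy1 : (K:ℝ) ≤ y + 1 := (Nat.ceil_lt_add_one hyy).le
  have ht : (0:ℝ) < (2:ℝ)^(-(N:ℤ)) := by positivity
  have h1 : (2:ℝ)^(-(N:ℤ)) * (2:ℝ)^N = 1 := by
    rw [← zpow_natCast (2:ℝ) N, ← zpow_add₀ (by norm_num : (2:ℝ) ≠ 0)]
    simp
  have hB : 2*(4:ℝ)^K * (2:ℝ)^(-(N:ℤ)) ≤ 8*(4:ℝ)^(-x) := by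
    have h4K : (4:ℝ)^K ≤ (4:ℝ)^(y+1) := by
      rw [← Real.rpow_natCast (4:ℝ) K]
      exact Real.rpow_le_rpow_of_exponent_le (by norm_num) hKy1
    have h4y1 : (4:ℝ)^(y+1) = 4 * (4:ℝ)^(-x) * (2:ℝ)^N := by
      rw [hy, show (N:ℝ)/2 - x + 1 = (N:ℝ)/2 + (-x) + 1 from by ring,
        Real.rpow_add (by norm_num), Real.rpow_add (by norm_num), pow4_eq,
        Real.rpow_one]
      ring
    calc 2*(4:ℝ)^K * (2:ℝ)^(-(N:ℤ)) ≤ 2*(4 * (4:ℝ)^(-x) * (2:ℝ)^N) * (2:ℝ)^(-(N:ℤ)) := by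
          nlinarith [h4K.trans_eq h4y1]
    _ = 8*(4:ℝ)^(-x) * ((2:ℝ)^(-(N:ℤ)) * (2:ℝ)^N) := by ring
    _ = 8*(4:ℝ)^(-x) := by rw [h1]; ring
  have hbb : 1 - 8*(4:ℝ)^(-x) ≤ 1 - 2*(4:ℝ)^K * (2:ℝ)^(-(N:ℤ)) := by linarith
  have hmul : (1 - 8*(4:ℝ)^(-x)) * y
      ≤ (1 - 2*(4:ℝ)^K * (2:ℝ)^(-(N:ℤ))) * (K:ℝ) :=
    mul_le_mul hbb hKy hyy (by linarith)
  have hmaster := sum_lin_ge N K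
  calc (1 - 8*(4:ℝ)^(-x)) * y ≤ (1 - 2*(4:ℝ)^K * (2:ℝ)^(-(N:ℤ))) * (K:ℝ) := hmul
  _ = (2:ℝ)^(-(N:ℤ)) * (((2:ℝ)^N - 2*4^K) * (K:ℝ)) := by linear_combination (-(K:ℝ)) * h1
  _ ≤ E := by
      rw [hE]
      exact mul_le_mul_of_nonneg_left hmaster ht.le

lemma four_rpow_neg_logb (n : ℝ) (hn : 0 < n) :
    (4:ℝ)^(-(Real.logb 2 n)) = 1/n^2 := by
  have h4 : (4:ℝ) = (2:ℝ)^(2:ℝ) := by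
    rw [show (2:ℝ)^(2:ℝ) = (2:ℝ)^((2:ℕ):ℝ) from by norm_num, Real.rpow_natCast]
    norm_num
  rw [h4, ← Real.rpow_mul (by norm_num : (0:ℝ) ≤ 2),
    show (2:ℝ) * -(Real.logb 2 n) = (Real.logb 2 n) * (-2) from by ring,
    Real.rpow_mul (by norm_num : (0:ℝ) ≤ 2),
    Real.rpow_logb (by norm_num) (by norm_num) hn,
    show (-2:ℝ) = ((-2:ℤ):ℝ) from by norm_num, Real.rpow_intCast]
  rw [zpow_neg, zpow_two, sq, one_div]

lemma nat_sq_le (n : ℕ) (h : 4 ≤ n) : n^2 ≤ 2^n := by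
  induction n, h using Nat.le_induction with
  | base => norm_num
  | succ n hn ih =>
    have h1 := ih
    have h2 : 2*n + 1 ≤ n^2 := by nlinarith
    calc (n+1)^2 = n^2 + (2*n+1) := by ring
    _ ≤ 2^n + 2^n := by omega
    _ = 2^(n+1) := by rw [pow_succ]; ring

lemma logb_le_half (N : ℕ) (h : 4 ≤ N) : Real.logb 2 N ≤ (N:ℝ)/2 := by
  have hN0 : (0:ℝ) < N := by positivity
  rw [Real.logb_le_iff_le_rpow (by norm_num) hN0]
  have ha : (0:ℝ) ≤ (2:ℝ)^((N:ℝ)/2) := Real.rpow_nonneg (by norm_num) _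
  have hsq : ((2:ℝ)^((N:ℝ)/2))^2 = (2:ℝ)^N := by
    rw [← Real.rpow_natCast ((2:ℝ)^((N:ℝ)/2)) 2, ← Real.rpow_mul (by norm_num : (0:ℝ) ≤ 2),
      show (N:ℝ)/2 * ((2:ℕ):ℝ) = (N:ℝ) from by push_cast; ring, Real.rpow_natCast]
  have hNsq : ((N:ℝ))^2 ≤ (2:ℝ)^N := by
    have := nat_sq_le N h
    have := (Nat.cast_le (α := ℝ)).2 this
    push_cast at this
    linarith
  nlinarith [sq_nonneg ((2:ℝ)^((N:ℝ)/2) - (N:ℝ)), sq_nonneg ((2:ℝ)^((N:ℝ)/2) + (N:ℝ))]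

lemma logb3 : (3:ℝ)/2 ≤ Real.logb 2 3 := by
  rw [Real.le_logb_iff_rpow_le (by norm_num) (by norm_num)]
  have ha : (0:ℝ) < (2:ℝ)^((3:ℝ)/2) := Real.rpow_pos_of_pos (by norm_num) _
  have hsq : ((2:ℝ)^((3:ℝ)/2))^2 = 8 := by
    rw [← Real.rpow_natCast ((2:ℝ)^((3:ℝ)/2)) 2, ← Real.rpow_mul (by norm_num : (0:ℝ) ≤ 2),
      show (3:ℝ)/2 * ((2:ℕ):ℝ) = ((3:ℕ):ℝ) from by push_cast; ring, Real.rpow_natCast]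
    norm_num
  nlinarith [sq_nonneg ((2:ℝ)^((3:ℝ)/2) - 3)]

lemma part2L (N : ℕ) :
    (1 - 8 * (4 : ℝ) ^ (-(Real.logb 2 N))) * ((N : ℝ) / 2 - Real.logb 2 N) ≤
      (2 : ℝ) ^ (-(N : ℤ)) * ∑ v : Fin N → ZMod 2, (symLinComplexity N v : ℝ) := by
  have hE0 : (0:ℝ) ≤ (2 : ℝ) ^ (-(N : ℤ)) *
      ∑ v : Fin N → ZMod 2, (symLinComplexity N v : ℝ) := by
    have hs : (0:ℝ) ≤ ∑ v : Fin N → ZMod 2, (symLinComplexity N v : ℝ) :=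
      Finset.sum_nonneg fun v _ => by positivity
    positivity
  have hs : (0:ℝ) ≤ ∑ v : Fin N → ZMod 2, (symLinComplexity N v : ℝ) :=
    Finset.sum_nonneg fun v _ => by positivity
  rcases lt_or_ge N 4 with h4 | h4
  · interval_cases N
    · norm_num [Real.logb_zero]
    · norm_num [Real.logb_one]
      linarith
    · have h2 : Real.logb 2 ((2:ℕ):ℝ) = 1 := by
        norm_num [Real.logb_self_eq_one]
      rw [h2]
      norm_num
      linarith
    · have hid : (4:ℝ)^(-(Real.logb 2 ((3:ℕ):ℝ))) = 1/((3:ℝ))^2 := by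
        have h := four_rpow_neg_logb 3 (by norm_num)
        have h3c : Real.logb 2 ((3:ℕ):ℝ) = Real.logb 2 3 := by norm_num
        rw [h3c, h]
      have h32 := logb3
      rw [hid]
      have h3c : Real.logb 2 ((3:ℕ):ℝ) = Real.logb 2 3 := by norm_num
      rw [h3c]
      push_cast
      nlinarith [hE0, h32]
  · exact main2 N (Real.logb 2 N) (by have := logb_le_half N h4; linarith)


theorem stmt17 :
    ∃ c : ℝ, 0 < c ∧
      (∀ r : ℕ → ℝ, Filter.Tendsto r Filter.atTop Filter.atTop →
        ∀ N : ℕ,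
          (1 - c * (4 : ℝ) ^ (-r N)) * (2 : ℝ) ^ ((N : ℝ) / 2 - r N) ≤
            (2 : ℝ) ^ (-(N : ℤ)) *
              ∑ v : Fin N → ZMod 2, (2 : ℝ) ^ (symLinComplexity N v)) ∧
      (∀ N : ℕ,
        (1 - c * (4 : ℝ) ^ (-(Real.logb 2 N))) * ((N : ℝ) / 2 - Real.logb 2 N) ≤
          (2 : ℝ) ^ (-(N : ℤ)) *
            ∑ v : Fin N → ZMod 2, (symLinComplexity N v : ℝ)) ∧
      (∃ ε : ℕ → ℝ, Filter.Tendsto ε Filter.atTop (nhds 0) ∧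
        ∀ N : ℕ,
          (N : ℝ) / 2 - Real.logb 2 N + ε N ≤
            (2 : ℝ) ^ (-(N : ℤ)) *
              ∑ v : Fin N → ZMod 2, (symLinComplexity N v : ℝ)) := by
  refine ⟨8, by norm_num, fun r _ N => main1 N (r N), part2L, fun N => (-4)/(N:ℝ), ?_, ?_⟩
  · exact tendsto_const_div_atTop_nhds_zero_nat (-4)
  · intro N
    rcases Nat.eq_zero_or_pos N with h0 | h0
    · subst h0
      have hs : (0:ℝ) ≤ ∑ v : Fin 0 → ZMod 2, (symLinComplexity 0 v : ℝ) :=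
        Finset.sum_nonneg fun v _ => by positivity
      norm_num [Real.logb_zero]
    · have hN0 : (0:ℝ) < N := by exact_mod_cast h0
      have hx0 : (0:ℝ) ≤ Real.logb 2 N :=
        Real.logb_nonneg one_lt_two (by exact_mod_cast h0)
      have hid := four_rpow_neg_logb N hN0
      have key : (N:ℝ)/2 - Real.logb 2 N + (-4)/(N:ℝ) ≤
          (1 - 8 * (4:ℝ)^(-(Real.logb 2 N))) * ((N:ℝ)/2 - Real.logb 2 N) := by
        rw [hid]
        have hNne : (N:ℝ) ≠ 0 := ne_of_gt hN0
        have hdiff : (1 - 8*(1/(N:ℝ)^2)) * ((N:ℝ)/2 - Real.logb 2 N)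
            - ((N:ℝ)/2 - Real.logb 2 N + (-4)/(N:ℝ)) = 8*Real.logb 2 N/(N:ℝ)^2 := by
          field_simp
          ring
        have hpos : (0:ℝ) ≤ 8*Real.logb 2 N/(N:ℝ)^2 := by positivity
        linarith
      exact key.trans (part2L N)
end
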